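/- Let N be a binary tree-child network and let x, y be two leaves with d_N(x,y) ≥ 4. Then no maximum lower-level subnetwork (MLLS) of N contains x and y as a cherry (i.e., with a common parent). -/

import Mathlib

open scoped Classical
noncomputable section

/-- A (rooted binary phylogenetic) network datum: a finite directed graph on `ℕ`
with an optional leaf-labelling by `α`. -/
structure Net (α : Type) where
  verts : Finset ℕ
  edges : Finset (ℕ × ℕ)
  lab : ℕ → Option α

namespace Net

variable {α β : Type}

def Edge (N : Net α) (u v : ℕ) : Prop := (u, v) ∈ N.edges

def indeg (N : Net α) (v : ℕ) : ℕ := (N.edges.filter fun e => e.2 = v).card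
def outdeg (N : Net α) (v : ℕ) : ℕ := (N.edges.filter fun e => e.1 = v).card

/-- Reachability by directed paths. -/
def Reaches (N : Net α) : ℕ → ℕ → Prop := Relation.ReflTransGen N.Edge

def IsRoot (N : Net α) (v : ℕ) : Prop :=
  v ∈ N.verts ∧ N.indeg v = 0 ∧ N.outdeg v = 1
def IsLeaf (N : Net α) (v : ℕ) : Prop :=
  v ∈ N.verts ∧ N.indeg v = 1 ∧ N.outdeg v = 0
def IsTreeNode (N : Net α) (v : ℕ) : Prop :=
  v ∈ N.verts ∧ N.indeg v = 1 ∧ N.outdeg v = 2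
def IsRetic (N : Net α) (v : ℕ) : Prop :=
  v ∈ N.verts ∧ N.indeg v = 2 ∧ N.outdeg v = 1

/-- `N` is a rooted binary phylogenetic network on leaf set `α`. -/
def IsNetwork (N : Net α) : Prop :=
  (∀ e ∈ N.edges, e.1 ∈ N.verts ∧ e.2 ∈ N.verts) ∧
  (∀ u v, N.Edge u v → ¬ N.Reaches v u) ∧
  (∃! r, N.IsRoot r) ∧
  (∀ v ∈ N.verts, N.IsRoot v ∨ N.IsLeaf v ∨ N.IsTreeNode v ∨ N.IsRetic v) ∧
  (∀ v, (∃ x, N.lab v = some x) ↔ N.IsLeaf v) ∧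
  (∀ x : α, ∃! v, N.lab v = some x)

/-- Tree-child: every non-leaf node has a child that is a tree node or a leaf. -/
def TreeChild (N : Net α) : Prop :=
  N.IsNetwork ∧
  ∀ v ∈ N.verts, ¬ N.IsLeaf v → ∃ c, N.Edge v c ∧ (N.IsTreeNode c ∨ N.IsLeaf c)

def IsReticEdge (N : Net α) (e : ℕ × ℕ) : Prop := e ∈ N.edges ∧ N.IsRetic e.2

def deleteNode (N : Net α) (v : ℕ) : Net α :=
  ⟨N.verts.erase v, N.edges.filter fun e => e.1 ≠ v ∧ e.2 ≠ v, N.lab⟩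

def deleteEdge (N : Net α) (e : ℕ × ℕ) : Net α := ⟨N.verts, N.edges.erase e, N.lab⟩

def deleteEdges (N : Net α) (E : Finset (ℕ × ℕ)) : Net α := ⟨N.verts, N.edges \ E, N.lab⟩

/-- One step of cleaning up: delete an unlabelled outdegree-0 node, or suppress an
indegree-1 outdegree-1 node.  (In this simple-digraph encoding the parallel-edge rule
is subsumed: the inserted edge merges with an existing one, and the endpoints are then
suppressed by further steps.) -/
inductive CleanStep {α : Type} : Net α → Net α → Prop
  | delNode (N : Net α) (v : ℕ) (hv : v ∈ N.verts) (h0 : N.outdeg v = 0)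
      (hlab : N.lab v = none) : CleanStep N (N.deleteNode v)
  | suppress (N : Net α) (u v w : ℕ) (h1 : N.indeg v = 1) (h2 : N.outdeg v = 1)
      (hu : N.Edge u v) (hw : N.Edge v w) :
      CleanStep N ⟨N.verts.erase v,
        insert (u, w) (N.edges.filter fun e => e.1 ≠ v ∧ e.2 ≠ v), N.lab⟩

/-- `N` cleans up to `M`: apply clean-up steps until none applies. -/
def CleansTo (N M : Net α) : Prop :=
  Relation.ReflTransGen CleanStep N M ∧ ∀ M', ¬ CleanStep M M'

/-- Maximum subnetwork: delete one reticulation edge and clean up. -/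
def IsMaxSubnet (N M : Net α) : Prop :=
  ∃ e, N.IsReticEdge e ∧ CleansTo (N.deleteEdge e) M

/-- A reticulation edge is valid if deleting it and cleaning up removes exactly
2 nodes and 3 edges. -/
def ValidEdge (N : Net α) (e : ℕ × ℕ) : Prop :=
  N.IsReticEdge e ∧
  ∀ M, CleansTo (N.deleteEdge e) M →
    M.verts.card + 2 = N.verts.card ∧ M.edges.card + 3 = N.edges.card

/-- A valid network: all reticulation edges are valid. -/
def Valid (N : Net α) : Prop :=
  N.IsNetwork ∧ ∀ e, N.IsReticEdge e → N.ValidEdge e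

def Subgraph (M N : Net α) : Prop :=
  M.verts ⊆ N.verts ∧ M.edges ⊆ N.edges ∧ ∀ v ∈ M.verts, M.lab v = N.lab v

/-- One edge-subdivision step. -/
inductive SubdivStep {α : Type} : Net α → Net α → Prop
  | mk (N : Net α) (u v w : ℕ) (he : N.Edge u v) (hw : w ∉ N.verts) :
      SubdivStep N ⟨insert w N.verts,
        insert (u, w) (insert (w, v) (N.edges.erase (u, v))), N.lab⟩

/-- `M` is a subdivision of `N`. -/
def Subdivision (N M : Net α) : Prop := Relation.ReflTransGen SubdivStep N M

/-- Isomorphism of networks (preserving leaf labels). -/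
def Iso (N M : Net α) : Prop :=
  ∃ f : ℕ → ℕ, Set.BijOn f ↑N.verts ↑M.verts ∧
    (∀ u ∈ N.verts, ∀ v ∈ N.verts, (N.Edge u v ↔ M.Edge (f u) (f v))) ∧
    ∀ v ∈ N.verts, N.lab v = M.lab (f v)

/-- `N` displays `M`: some subgraph of `N` is (isomorphic to) a subdivision of `M`. -/
def Displays (N M : Net α) : Prop :=
  ∃ S M', Subgraph S N ∧ Subdivision M M' ∧ Iso M' S

/-- Leaf-descendant (label) set of a node. -/
def descSet (N : Net α) (v : ℕ) : Set α :=
  {x | ∃ l, N.lab l = some x ∧ N.Reaches v l}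

def Adj (N : Net α) (u v : ℕ) : Prop := N.Edge u v ∨ N.Edge v u

def ConnectedIn (N : Net α) (S : Finset ℕ) (u v : ℕ) : Prop :=
  Relation.ReflTransGen (fun a b => a ∈ S ∧ b ∈ S ∧ N.Adj a b) u v

/-- A biconnected vertex set: at least 3 nodes, connected, and no cut-node. -/
def BiconnectedSet (N : Net α) (S : Finset ℕ) : Prop :=
  3 ≤ S.card ∧ S ⊆ N.verts ∧
  (∀ u ∈ S, ∀ v ∈ S, N.ConnectedIn S u v) ∧
  ∀ c ∈ S, ∀ u ∈ S.erase c, ∀ v ∈ S.erase c, N.ConnectedIn (S.erase c) u v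

/-- A biconnected component: a maximal biconnected set. -/
def BlobSet (N : Net α) (S : Finset ℕ) : Prop :=
  N.BiconnectedSet S ∧ ∀ T, N.BiconnectedSet T → S ⊆ T → S = T

/-- A blob: either a biconnected component, or a tree node in no biconnected component. -/
def IsBlob (N : Net α) (S : Finset ℕ) : Prop :=
  N.BlobSet S ∨ ∃ t, S = {t} ∧ N.IsTreeNode t ∧ ∀ T, N.BlobSet T → t ∉ T

/-- The top node of a blob: the node of the blob from which all its nodes are reachable. -/
def TopNode (N : Net α) (S : Finset ℕ) (v : ℕ) : Prop :=
  v ∈ S ∧ ∀ u ∈ S, N.Reaches v u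

/-- The blob tree of `N` contains a blob node labelled `A`. -/
def HasBlobNode (N : Net α) (A : Set α) : Prop :=
  ∃ S v, N.IsBlob S ∧ N.TopNode S v ∧ N.descSet v = A

/-- The blob tree of `N` has an edge from blob node `A` to blob node `B`. -/
def BTEdge (N : Net α) (A B : Set α) : Prop :=
  ∃ S T u v, N.IsBlob S ∧ N.IsBlob T ∧ S ≠ T ∧ N.TopNode S u ∧ N.TopNode T v ∧
    N.descSet u = A ∧ N.descSet v = B ∧ ∃ w ∈ S, N.Edge w v

def reticCount (N : Net α) (S : Finset ℕ) : ℕ := (S.filter fun v => N.IsRetic v).card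

/-- `N` is a level-`k` network. -/
def IsLevel (N : Net α) (k : ℕ) : Prop :=
  (∀ S, N.BiconnectedSet S → N.reticCount S ≤ k) ∧
  (k = 0 ∨ ∃ S, N.BiconnectedSet S ∧ N.reticCount S = k)

/-- `M` is a maximum lower-level subnetwork (MLLS) of the level-`k` network `N`:
obtained by deleting exactly one valid reticulation edge from every level-`k`
biconnected component and cleaning up. -/
def IsMLLS (N : Net α) (k : ℕ) (M : Net α) : Prop :=
  ∃ E : Finset (ℕ × ℕ),
    (∀ e ∈ E, N.ValidEdge e) ∧
    (∀ S, N.BlobSet S → N.reticCount S = k → ∃! e, e ∈ E ∧ e.1 ∈ S ∧ e.2 ∈ S) ∧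
    (∀ e ∈ E, ∃ S, N.BlobSet S ∧ N.reticCount S = k ∧ e.1 ∈ S ∧ e.2 ∈ S) ∧
    CleansTo (N.deleteEdges E) M

/-- A cherry on two leaves. -/
def Cherry (N : Net α) (x y : ℕ) : Prop :=
  N.IsLeaf x ∧ N.IsLeaf y ∧ x ≠ y ∧ ∃ p, N.Edge p x ∧ N.Edge p y

/-- A reticulated cherry on two leaves, with the reticulation on `y`. -/
def RetCherry (N : Net α) (x y : ℕ) : Prop :=
  N.IsLeaf x ∧ N.IsLeaf y ∧
  ∃ p r, N.IsRetic r ∧ N.Edge r y ∧ N.Edge p x ∧ N.Edge p r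

/-- A reticulated cherry shape on non-reticulation nodes `x, y` with nodes
`px, py, gy` and edges `(px,x), (px,py), (gy,py), (py,y)`, `py` a reticulation. -/
def RetCherryShape (N : Net α) (x y px py gy : ℕ) : Prop :=
  ¬ N.IsRetic x ∧ ¬ N.IsRetic y ∧ N.IsRetic py ∧ px ≠ gy ∧
  N.Edge px x ∧ N.Edge px py ∧ N.Edge gy py ∧ N.Edge py y

def DirPath (N : Net α) (l : List ℕ) : Prop := l ≠ [] ∧ l.Chain' N.Edge

/-- `l` is the node sequence of an up-down path from `x` to `y`: a directed path from
an apex down to `x`, reversed, followed by a directed path from the apex down to `y`. -/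
def IsUpDownPath (N : Net α) (x y : ℕ) (l : List ℕ) : Prop :=
  ∃ p q : List ℕ, N.DirPath p ∧ N.DirPath q ∧ p.head? = q.head? ∧
    p.getLast? = some x ∧ q.getLast? = some y ∧ l = p.reverse ++ q.tail

/-- `n` is the shortest up-down distance between `x` and `y` (an up-down path with `n`
edges has `n+1` nodes). -/
def IsUpDownDist (N : Net α) (x y n : ℕ) : Prop :=
  (∃ l, N.IsUpDownPath x y l ∧ l.length = n + 1) ∧
  ∀ l, N.IsUpDownPath x y l → n + 1 ≤ l.length

def relabel (N : Net α) (f : α → β) : Net β :=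
  ⟨N.verts, N.edges, fun v => (N.lab v).map f⟩

/-- Collapse the pendant subnetwork rooted at `y` to a single leaf labelled `A`. -/
def collapseAt (N : Net α) (y : ℕ) (A : α) : Net α :=
  ⟨N.verts.filter (fun v => v = y ∨ ¬ N.Reaches y v),
   N.edges.filter (fun e => ¬ N.Reaches y e.1),
   fun v => if v = y then some A else N.lab v⟩

/-- Leaf-descendant set for networks whose leaves are labelled by sets of taxa. -/
def descUnion (N : Net (Set α)) (v : ℕ) : Set α :=
  {x | ∃ l s, N.lab l = some s ∧ x ∈ s ∧ N.Reaches v l}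

def HasBlobNodeU (N : Net (Set α)) (A : Set α) : Prop :=
  ∃ S v, N.IsBlob S ∧ N.TopNode S v ∧ N.descUnion v = A

/-- `M` is a subnetwork of `N`: displayed by `N` and not `N` itself. -/
def Subnet (N M : Net α) : Prop := M.IsNetwork ∧ N.Displays M ∧ ¬ N.Iso M

/-- Equality of sets of networks up to isomorphism. -/
def SetEquiv (S T : Set (Net α)) : Prop :=
  ∀ M, (∃ M₁ ∈ S, Iso M M₁) ↔ ∃ M₂ ∈ T, Iso M M₂

/-- The subnetworks of `N` of level at most `k - 1`. -/
def lowerSubnets (N : Net α) (k : ℕ) : Set (Net α) :=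
  {M | N.Subnet M ∧ ∃ j < k, M.IsLevel j}

/-- The set of all MLLSs of `N`. -/
def mllsSet (N : Net α) : Set (Net α) :=
  {M | ∃ k, N.IsLevel k ∧ N.IsMLLS k M}

end Net

attribute [simp] List.Chain'

theorem List.chain'_cons {α : Type*} {R : α → α → Prop} {x y : α} {l : List α} :
    List.Chain' R (x :: y :: l) ↔ R x y ∧ List.Chain' R (y :: l) := List.isChain_cons_cons

theorem List.chain'_cons' {α : Type*} {R : α → α → Prop} {x : α} {l : List α} :
    List.Chain' R (x :: l) ↔ (∀ y ∈ l.head?, R x y) ∧ List.Chain' R l := List.isChain_cons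

theorem List.chain'_pair {α : Type*} {R : α → α → Prop} {x y : α} :
    List.Chain' R [x, y] ↔ R x y := List.isChain_pair

theorem List.chain'_append {α : Type*} {R : α → α → Prop} {l₁ l₂ : List α} :
    List.Chain' R (l₁ ++ l₂) ↔ List.Chain' R l₁ ∧ List.Chain' R l₂ ∧
      ∀ x ∈ l₁.getLast?, ∀ y ∈ l₂.head?, R x y := List.isChain_append

theorem List.Chain'.imp {α : Type*} {R S : α → α → Prop} (H : ∀ a b : α, R a b → S a b)
    {l : List α} (h : List.Chain' R l) : List.Chain' S l := List.IsChain.imp (fun a b => H a b) h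

theorem List.length_pos {α : Type*} {l : List α} : 0 < l.length ↔ l ≠ [] := List.length_pos_iff

theorem List.length_eq_one {α : Type*} {l : List α} : l.length = 1 ↔ ∃ a, l = [a] :=
  List.length_eq_one_iff

theorem List.chain'_reverse {α : Type*} {R : α → α → Prop} {l : List α} :
    List.Chain' R l.reverse ↔ List.Chain' (flip R) l := List.isChain_reverse

namespace MLAux
open Net Relation List

variable {X : Type} {N : Net X}

/-! ### Basic acyclicity and degree facts -/

lemma transGen_head {r : ℕ → ℕ → Prop} {a c : ℕ} (h : Relation.TransGen r a c) :
    ∃ b, r a b ∧ Relation.ReflTransGen r b c := by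
  induction h using Relation.TransGen.head_induction_on with
  | single h => exact ⟨_, h, .refl⟩
  | head h' h _ => exact ⟨_, h', h.to_reflTransGen⟩

lemma edge_verts (hNet : N.IsNetwork) {a b : ℕ} (h : (a, b) ∈ N.edges) :
    a ∈ N.verts ∧ b ∈ N.verts := hNet.1 (a, b) h

lemma no_cycle (hNet : N.IsNetwork) (a : ℕ) : ¬ Relation.TransGen N.Edge a a := by
  intro h
  obtain ⟨c, hac, hca⟩ := transGen_head h
  exact hNet.2.1 a c hac hca

lemma edge_irrefl (hNet : N.IsNetwork) {a : ℕ} : ¬ N.Edge a a :=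
  fun h => no_cycle hNet a (Relation.TransGen.single h)

lemma reaches_edge_cycle (hNet : N.IsNetwork) {a b : ℕ} (h : N.Reaches a b)
    (h' : N.Edge b a) : False :=
  no_cycle hNet a (Relation.TransGen.tail' h h')

lemma outdeg_pos {v c : ℕ} (h : (v, c) ∈ N.edges) : 0 < N.outdeg v :=
  Finset.card_pos.2 ⟨(v, c), Finset.mem_filter.2 ⟨h, rfl⟩⟩

lemma indeg_pos {q v : ℕ} (h : (q, v) ∈ N.edges) : 0 < N.indeg v :=
  Finset.card_pos.2 ⟨(q, v), Finset.mem_filter.2 ⟨h, rfl⟩⟩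

lemma unique_parent {v : ℕ} (h1 : N.indeg v = 1) {a b : ℕ}
    (ha : (a, v) ∈ N.edges) (hb : (b, v) ∈ N.edges) : a = b := by
  obtain ⟨e, he⟩ := Finset.card_eq_one.1 h1
  have h1' : ((a, v) : ℕ × ℕ) ∈ N.edges.filter fun e => e.2 = v :=
    Finset.mem_filter.2 ⟨ha, rfl⟩
  have h2' : ((b, v) : ℕ × ℕ) ∈ N.edges.filter fun e => e.2 = v :=
    Finset.mem_filter.2 ⟨hb, rfl⟩
  rw [he, Finset.mem_singleton] at h1' h2'
  exact congrArg Prod.fst (h1'.trans h2'.symm)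

lemma unique_child {v : ℕ} (h1 : N.outdeg v = 1) {a b : ℕ}
    (ha : (v, a) ∈ N.edges) (hb : (v, b) ∈ N.edges) : a = b := by
  obtain ⟨e, he⟩ := Finset.card_eq_one.1 h1
  have h1' : ((v, a) : ℕ × ℕ) ∈ N.edges.filter fun e => e.1 = v :=
    Finset.mem_filter.2 ⟨ha, rfl⟩
  have h2' : ((v, b) : ℕ × ℕ) ∈ N.edges.filter fun e => e.1 = v :=
    Finset.mem_filter.2 ⟨hb, rfl⟩
  rw [he, Finset.mem_singleton] at h1' h2'
  exact congrArg Prod.snd (h1'.trans h2'.symm)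

lemma exists_parent {v : ℕ} (h : 0 < N.indeg v) : ∃ q, (q, v) ∈ N.edges := by
  obtain ⟨⟨q, v'⟩, he⟩ := Finset.card_pos.1 h
  rw [Finset.mem_filter] at he
  obtain ⟨he1, he2⟩ := he
  simp only at he2; subst he2
  exact ⟨q, he1⟩

lemma exists_child {v : ℕ} (h : 0 < N.outdeg v) : ∃ c, (v, c) ∈ N.edges := by
  obtain ⟨⟨v', c⟩, he⟩ := Finset.card_pos.1 h
  rw [Finset.mem_filter] at he
  obtain ⟨he1, he2⟩ := he
  simp only at he2; subst he2
  exact ⟨c, he1⟩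

lemma two_children {v : ℕ} (h : N.outdeg v = 2) {a b : ℕ}
    (ha : (v, a) ∈ N.edges) (hb : (v, b) ∈ N.edges) (hab : a ≠ b) :
    ∀ c, (v, c) ∈ N.edges → c = a ∨ c = b := by
  intro c hc
  have hsub : ({(v, a), (v, b)} : Finset (ℕ × ℕ)) ⊆ N.edges.filter fun e => e.1 = v := by
    intro e he
    rcases Finset.mem_insert.1 he with rfl | he
    · exact Finset.mem_filter.2 ⟨ha, rfl⟩
    · rw [Finset.mem_singleton] at he; subst he; exact Finset.mem_filter.2 ⟨hb, rfl⟩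
  have hcard : ({(v, a), (v, b)} : Finset (ℕ × ℕ)).card = 2 := by
    rw [Finset.card_insert_of_notMem (by simp [hab]), Finset.card_singleton]
  have heq := Finset.eq_of_subset_of_card_le hsub (by rw [hcard]; exact le_of_eq h)
  have : ((v, c) : ℕ × ℕ) ∈ ({(v, a), (v, b)} : Finset (ℕ × ℕ)) := by
    rw [heq]; exact Finset.mem_filter.2 ⟨hc, rfl⟩
  rcases Finset.mem_insert.1 this with h' | h'
  · exact Or.inl (congrArg Prod.snd h')
  · rw [Finset.mem_singleton] at h'; exact Or.inr (congrArg Prod.snd h')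

lemma two_parents {v : ℕ} (h : N.indeg v = 2) {a b : ℕ}
    (ha : (a, v) ∈ N.edges) (hb : (b, v) ∈ N.edges) (hab : a ≠ b) :
    ∀ c, (c, v) ∈ N.edges → c = a ∨ c = b := by
  intro c hc
  have hsub : ({(a, v), (b, v)} : Finset (ℕ × ℕ)) ⊆ N.edges.filter fun e => e.2 = v := by
    intro e he
    rcases Finset.mem_insert.1 he with rfl | he
    · exact Finset.mem_filter.2 ⟨ha, rfl⟩
    · rw [Finset.mem_singleton] at he; subst he; exact Finset.mem_filter.2 ⟨hb, rfl⟩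
  have hcard : ({(a, v), (b, v)} : Finset (ℕ × ℕ)).card = 2 := by
    rw [Finset.card_insert_of_notMem (by simp [hab]), Finset.card_singleton]
  have heq := Finset.eq_of_subset_of_card_le hsub (by rw [hcard]; exact le_of_eq h)
  have : ((c, v) : ℕ × ℕ) ∈ ({(a, v), (b, v)} : Finset (ℕ × ℕ)) := by
    rw [heq]; exact Finset.mem_filter.2 ⟨hc, rfl⟩
  rcases Finset.mem_insert.1 this with h' | h'
  · exact Or.inl (congrArg Prod.fst h')
  · rw [Finset.mem_singleton] at h'; exact Or.inr (congrArg Prod.fst h')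

lemma other_parent {v : ℕ} (h : N.indeg v = 2) {a : ℕ} (ha : (a, v) ∈ N.edges) :
    ∃ b, b ≠ a ∧ (b, v) ∈ N.edges ∧ ∀ c, (c, v) ∈ N.edges → c = a ∨ c = b := by
  obtain ⟨e1, e2, hne, hset⟩ :=
    Finset.card_eq_two.1 (show (N.edges.filter fun e => e.2 = v).card = 2 from h)
  have hmem : ∀ e ∈ ({e1, e2} : Finset (ℕ × ℕ)), e ∈ N.edges ∧ e.2 = v := by
    intro e he; rw [← hset] at he; exact Finset.mem_filter.1 he
  obtain ⟨h1e, h1v⟩ := hmem e1 (by simp)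
  obtain ⟨h2e, h2v⟩ := hmem e2 (by simp)
  have he1 : (e1.1, v) = e1 := Prod.ext rfl h1v.symm
  have he2 : (e2.1, v) = e2 := Prod.ext rfl h2v.symm
  have haa : ((a, v) : ℕ × ℕ) ∈ ({e1, e2} : Finset (ℕ × ℕ)) := by
    rw [← hset]; exact Finset.mem_filter.2 ⟨ha, rfl⟩
  have key : ∀ c, (c, v) ∈ N.edges → (c = e1.1 ∨ c = e2.1) := by
    intro c hc
    have hcc : ((c, v) : ℕ × ℕ) ∈ ({e1, e2} : Finset (ℕ × ℕ)) := by
      rw [← hset]; exact Finset.mem_filter.2 ⟨hc, rfl⟩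
    rcases Finset.mem_insert.1 hcc with h' | h'
    · exact Or.inl (congrArg Prod.fst h')
    · rw [Finset.mem_singleton] at h'; exact Or.inr (congrArg Prod.fst h')
  rcases Finset.mem_insert.1 haa with h' | h'
  · refine ⟨e2.1, ?_, he2 ▸ h2e, ?_⟩
    · intro hba; apply hne; rw [← h', ← he2, hba]
    · intro c hc
      rcases key c hc with h'' | h''
      · left; rw [h'', ← h']
      · right; exact h''
  · rw [Finset.mem_singleton] at h'
    refine ⟨e1.1, ?_, he1 ▸ h1e, ?_⟩
    · intro hba; apply hne; rw [← h', ← he1, hba]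
    · intro c hc
      rcases key c hc with h'' | h''
      · right; exact h''
      · left; rw [h'', ← h']

lemma classify (hNet : N.IsNetwork) {v : ℕ} (hv : v ∈ N.verts) :
    N.IsRoot v ∨ N.IsLeaf v ∨ N.IsTreeNode v ∨ N.IsRetic v := hNet.2.2.2.1 v hv

lemma retic_not_tl {c : ℕ} (hc : N.IsRetic c) : ¬ (N.IsTreeNode c ∨ N.IsLeaf c) := by
  rintro (h | h)
  · have := hc.2.1; have := h.2.1; omega
  · have := hc.2.2; have := h.2.2; omega

end MLAux
namespace MLAux
open Net Relation List

variable {X : Type} {N : Net X}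

/-! ### Chains and paths -/

lemma chain_mem_transGen {R : ℕ → ℕ → Prop} :
    ∀ {l : List ℕ} {a b : ℕ}, List.Chain' R (a :: l) → b ∈ l → Relation.TransGen R a b := by
  intro l
  induction l with
  | nil => intro a b _ hb; simp at hb
  | cons h t ih =>
    intro a b hc hb
    have hah : R a h := (List.chain'_cons.1 hc).1
    rcases List.mem_cons.1 hb with rfl | hb'
    · exact Relation.TransGen.single hah
    · exact Relation.TransGen.head hah (ih (List.chain'_cons.1 hc).2 hb')

lemma chain_nodup (hNet : N.IsNetwork) {l : List ℕ} (hc : List.Chain' N.Edge l) : l.Nodup := by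
  induction l with
  | nil => simp
  | cons a t ih =>
    refine List.nodup_cons.2 ⟨fun ha => ?_, ih hc.tail⟩
    exact no_cycle hNet a (chain_mem_transGen hc ha)

lemma chain_head_reaches_mem {R : ℕ → ℕ → Prop} {l : List ℕ} {a b : ℕ}
    (hc : List.Chain' R (a :: l)) (hb : b ∈ a :: l) : Relation.ReflTransGen R a b := by
  rcases List.mem_cons.1 hb with rfl | hb'
  · exact Relation.ReflTransGen.refl
  · exact (chain_mem_transGen hc hb').to_reflTransGen

/-- every member of a chain reaches the last element -/
lemma chain_mem_reaches_last {R : ℕ → ℕ → Prop} :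
    ∀ {l : List ℕ} {b z : ℕ}, List.Chain' R l → l.getLast? = some b → z ∈ l →
      Relation.ReflTransGen R z b := by
  intro l
  induction l with
  | nil => intro b z _ h; simp at h
  | cons a t ih =>
    intro b z hc hlast hz
    rcases List.mem_cons.1 hz with rfl | hz'
    · -- z = a
      cases t with
      | nil => simp at hlast; subst hlast; exact .refl
      | cons c s =>
        have : (c :: s).getLast? = some b := by
          rwa [List.getLast?_cons_cons] at hlast
        have h1 : R z c := (List.chain'_cons.1 hc).1
        exact Relation.ReflTransGen.head h1 (ih (List.chain'_cons.1 hc).2 this (by simp))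
    · cases t with
      | nil => simp at hz'
      | cons c s =>
        have : (c :: s).getLast? = some b := by
          rwa [List.getLast?_cons_cons] at hlast
        exact ih hc.tail this hz'

lemma reaches_path {a b : ℕ} (h : N.Reaches a b) :
    ∃ l : List ℕ, List.Chain' N.Edge (a :: l) ∧ (a :: l).getLast? = some b := by
  induction h with
  | refl => exact ⟨[], by simp, by simp⟩
  | tail _ hbc ih =>
    obtain ⟨l, hc, hlast⟩ := ih
    rename_i b' c' _
    refine ⟨l ++ [c'], ?_, ?_⟩
    · rw [show a :: (l ++ [c']) = (a :: l) ++ [c'] from rfl, List.chain'_append]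
      refine ⟨hc, by simp, ?_⟩
      intro x hx y hy
      simp only [List.head?_cons, Option.mem_def, Option.some.injEq] at hy
      rw [hlast] at hx
      simp only [Option.mem_def, Option.some.injEq] at hx
      subst hx; subst hy; exact hbc
    · rw [show a :: (l ++ [c']) = (a :: l) ++ [c'] from rfl, List.getLast?_concat]

/-! ### Root reaches everything -/

lemma root_reaches (hNet : N.IsNetwork) {r : ℕ} (hr : N.IsRoot r) :
    ∀ v ∈ N.verts, N.Reaches r v := by
  suffices H : ∀ m, ∀ v ∈ N.verts,
      (N.verts.filter fun w => Relation.TransGen N.Edge w v).card < m → N.Reaches r v by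
    intro v hv
    exact H ((N.verts.filter fun w => Relation.TransGen N.Edge w v).card + 1) v hv (by omega)
  intro m
  induction m with
  | zero => intro v _ h; omega
  | succ m ih =>
    intro v hv hcard
    rcases classify hNet hv with hroot | hother
    · obtain ⟨r0, _, hun⟩ := hNet.2.2.1
      rw [hun v hroot, ← hun r hr]
      exact Relation.ReflTransGen.refl
    · have hind : 0 < N.indeg v := by
        rcases hother with h | h | h
        · rw [h.2.1]; omega
        · rw [h.2.1]; omega
        · rw [h.2.1]; omega
      obtain ⟨q, hq⟩ := exists_parent hind
      have hqv : q ∈ N.verts := (edge_verts hNet hq).1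
      have hsub : (N.verts.filter fun w => Relation.TransGen N.Edge w q) ⊂
          (N.verts.filter fun w => Relation.TransGen N.Edge w v) := by
        constructor
        · intro w hw
          rw [Finset.mem_filter] at hw ⊢
          exact ⟨hw.1, hw.2.tail hq⟩
        · intro hsub'
          have : q ∈ N.verts.filter fun w => Relation.TransGen N.Edge w v :=
            Finset.mem_filter.2 ⟨hqv, Relation.TransGen.single hq⟩
          have := hsub' this
          rw [Finset.mem_filter] at this
          exact no_cycle hNet q this.2
      have := Finset.card_lt_card hsub
      exact (ih q hqv (by omega)).tail hq

end MLAux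
namespace MLAux
open Net Relation List

variable {X : Type} {N : Net X}

/-! ### Context and deleted-edge set -/

/-- Bundled context: tree-child network with a set `E` of reticulation edges. -/
structure Ctx (N : Net X) (E : Finset (ℕ × ℕ)) : Prop where
  net : N.IsNetwork
  tc : ∀ v ∈ N.verts, ¬ N.IsLeaf v → ∃ c, N.Edge v c ∧ (N.IsTreeNode c ∨ N.IsLeaf c)
  retE : ∀ e ∈ E, e ∈ N.edges ∧ N.IsRetic e.2

/-- the surviving edges -/
def NEs (N : Net X) (E : Finset (ℕ × ℕ)) : Finset (ℕ × ℕ) := N.edges \ E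

/-- endpoints of deleted edges -/
def VE (E : Finset (ℕ × ℕ)) : Finset ℕ := E.image Prod.fst ∪ E.image Prod.snd

def NEin (N : Net X) (E : Finset (ℕ × ℕ)) (v : ℕ) : ℕ :=
  ((NEs N E).filter fun e => e.2 = v).card

def NEout (N : Net X) (E : Finset (ℕ × ℕ)) (v : ℕ) : ℕ :=
  ((NEs N E).filter fun e => e.1 = v).card

lemma NEs_sub {E : Finset (ℕ × ℕ)} : NEs N E ⊆ N.edges := Finset.sdiff_subset

lemma mem_NEs {E : Finset (ℕ × ℕ)} {e : ℕ × ℕ} :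
    e ∈ NEs N E ↔ e ∈ N.edges ∧ e ∉ E := Finset.mem_sdiff

lemma mem_VE {E : Finset (ℕ × ℕ)} {z : ℕ} :
    z ∈ VE E ↔ ∃ e ∈ E, z = e.1 ∨ z = e.2 := by
  unfold VE
  simp only [Finset.mem_union, Finset.mem_image]
  constructor
  · rintro (⟨e, he, rfl⟩ | ⟨e, he, rfl⟩)
    · exact ⟨e, he, Or.inl rfl⟩
    · exact ⟨e, he, Or.inr rfl⟩
  · rintro ⟨e, he, rfl | rfl⟩
    · exact Or.inl ⟨e, he, rfl⟩
    · exact Or.inr ⟨e, he, rfl⟩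

/-! ### Tree-child consequences -/

lemma Efst_tree (hC : Ctx N E) {e : ℕ × ℕ} (he : e ∈ E) : N.IsTreeNode e.1 := by
  obtain ⟨heE, hret⟩ := hC.retE e he
  have hv : e.1 ∈ N.verts := (edge_verts hC.net (by rw [Prod.mk.eta]; exact heE)).1
  have hout : 0 < N.outdeg e.1 := outdeg_pos (by rw [Prod.mk.eta]; exact heE)
  rcases classify hC.net hv with h | h | h | h
  · -- root: unique child is e.2, reticulation, contradicting tree-child
    exfalso
    have hnl : ¬ N.IsLeaf e.1 := fun hl => by have := hl.2.2; have := h.2.2; omega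
    obtain ⟨c, hc, hctl⟩ := hC.tc e.1 hv hnl
    have : c = e.2 := unique_child h.2.2 hc (by rw [Prod.mk.eta]; exact heE)
    subst this
    exact retic_not_tl hret hctl
  · exfalso; have := h.2.2; omega
  · exact h
  · exfalso
    have hnl : ¬ N.IsLeaf e.1 := fun hl => by have := hl.2.2; have := h.2.2; omega
    obtain ⟨c, hc, hctl⟩ := hC.tc e.1 hv hnl
    have : c = e.2 := unique_child h.2.2 hc (by rw [Prod.mk.eta]; exact heE)
    subst this
    exact retic_not_tl hret hctl

lemma tree_not_leaf {v : ℕ} (h : N.IsTreeNode v) : ¬ N.IsLeaf v :=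
  fun hl => by have := hl.2.2; have := h.2.2; omega

lemma retic_not_leaf {v : ℕ} (h : N.IsRetic v) : ¬ N.IsLeaf v :=
  fun hl => by have := hl.2.2; have := h.2.2; omega

/-- the other child of the tree node heading a deleted edge -/
lemma E_other_child (hC : Ctx N E) {e : ℕ × ℕ} (he : e ∈ E) :
    ∃ c, (e.1, c) ∈ N.edges ∧ c ≠ e.2 ∧ (N.IsTreeNode c ∨ N.IsLeaf c) ∧
      ∀ z, (e.1, z) ∈ N.edges → z = e.2 ∨ z = c := by
  obtain ⟨heE, hret⟩ := hC.retE e he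
  have htree := Efst_tree hC he
  obtain ⟨c, hc, hctl⟩ := hC.tc e.1 htree.1 (tree_not_leaf htree)
  have hce : c ≠ e.2 := fun h => retic_not_tl hret (h ▸ hctl)
  exact ⟨c, hc, hce, hctl, fun z hz => by
    rcases two_children htree.2.2 (show (e.1, e.2) ∈ N.edges by rw [Prod.mk.eta]; exact heE)
      hc (Ne.symm hce) z hz with h | h
    · exact Or.inl h
    · exact Or.inr h⟩

/-- the unique child of a reticulation is a tree node or leaf -/
lemma retic_child (hC : Ctx N E) {v : ℕ} (hv : N.IsRetic v) :
    ∃ c, (v, c) ∈ N.edges ∧ (N.IsTreeNode c ∨ N.IsLeaf c) ∧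
      ∀ z, (v, z) ∈ N.edges → z = c := by
  obtain ⟨c, hc, hctl⟩ := hC.tc v hv.1 (retic_not_leaf hv)
  exact ⟨c, hc, hctl, fun z hz => unique_child hv.2.2 hz hc⟩

/-- NE-children of deleted-edge endpoints are tree nodes or leaves -/
lemma VE_child_tl (hC : Ctx N E) {z t : ℕ} (hz : z ∈ VE E) (ht : (z, t) ∈ NEs N E) :
    N.IsTreeNode t ∨ N.IsLeaf t := by
  obtain ⟨e, he, hor⟩ := mem_VE.1 hz
  obtain ⟨htE, htnotE⟩ := mem_NEs.1 ht
  rcases hor with rfl | rfl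
  · obtain ⟨c, hc, hce, hctl, hall⟩ := E_other_child hC he
    rcases hall t htE with rfl | rfl
    · exfalso; exact htnotE (by rw [Prod.mk.eta] at *; exact he)
    · exact hctl
  · obtain ⟨c, hc, hctl, hall⟩ := retic_child hC (hC.retE e he).2
    rw [hall t htE]; exact hctl

/-- instant kill: an NE-edge from a deleted-edge endpoint never enters a reticulation -/
lemma IK (hC : Ctx N E) {z t : ℕ} (hz : z ∈ VE E) (ht : (z, t) ∈ NEs N E)
    (hret : N.IsRetic t) : False :=
  retic_not_tl hret (VE_child_tl hC hz ht)

/-- NE-outdegree of a deleted-edge endpoint is 1 -/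
lemma VE_NEout_one (hC : Ctx N E) {z : ℕ} (hz : z ∈ VE E) : NEout N E z = 1 := by
  obtain ⟨e, he, hor⟩ := mem_VE.1 hz
  rcases hor with rfl | rfl
  · obtain ⟨c, hc, hce, hctl, hall⟩ := E_other_child hC he
    have hmem : ((e.1, c) : ℕ × ℕ) ∈ NEs N E := by
      rw [mem_NEs]
      refine ⟨hc, fun hcE => ?_⟩
      exact retic_not_tl (hC.retE _ hcE).2 hctl
    have : (NEs N E).filter (fun f => f.1 = e.1) = {(e.1, c)} := by
      apply Finset.eq_singleton_iff_unique_mem.2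
      refine ⟨Finset.mem_filter.2 ⟨hmem, rfl⟩, ?_⟩
      intro ⟨a, b⟩ hf
      rw [Finset.mem_filter] at hf
      obtain ⟨hf1, hf2⟩ := hf
      obtain rfl : a = e.1 := hf2
      rcases hall b ((mem_NEs.1 hf1).1) with rfl | rfl
      · exfalso; exact (mem_NEs.1 hf1).2 (by rw [Prod.mk.eta] at *; exact he)
      · rfl
    unfold NEout; rw [this, Finset.card_singleton]
  · obtain ⟨c, hc, hctl, hall⟩ := retic_child hC (hC.retE e he).2
    have hmem : ((e.2, c) : ℕ × ℕ) ∈ NEs N E := by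
      rw [mem_NEs]
      exact ⟨hc, fun hcE => retic_not_tl (hC.retE _ hcE).2 hctl⟩
    have : (NEs N E).filter (fun f => f.1 = e.2) = {(e.2, c)} := by
      apply Finset.eq_singleton_iff_unique_mem.2
      refine ⟨Finset.mem_filter.2 ⟨hmem, rfl⟩, ?_⟩
      intro ⟨a, b⟩ hf
      rw [Finset.mem_filter] at hf
      obtain ⟨hf1, hf2⟩ := hf
      obtain rfl : a = e.2 := hf2
      rw [hall b ((mem_NEs.1 hf1).1)]
    unfold NEout; rw [this, Finset.card_singleton]

/-- if no deleted edge enters `v` then NE-indegree = indegree -/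
lemma NEin_eq_indeg {E : Finset (ℕ × ℕ)} {v : ℕ} (h : ∀ g ∈ E, g.2 ≠ v) :
    NEin N E v = N.indeg v := by
  unfold NEin Net.indeg
  congr 1
  ext ⟨a, b⟩
  simp only [Finset.mem_filter, mem_NEs]
  constructor
  · rintro ⟨⟨h1, _⟩, h2⟩; exact ⟨h1, h2⟩
  · rintro ⟨h1, h2⟩
    refine ⟨⟨h1, fun hE => ?_⟩, h2⟩
    exact h (a, b) hE h2

/-- NE-indegree of the head of a deleted edge is 1 (it is a tree node) -/
lemma Efst_NEin_one (hC : Ctx N E) {e : ℕ × ℕ} (he : e ∈ E) : NEin N E e.1 = 1 := by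
  have htree := Efst_tree hC he
  rw [NEin_eq_indeg, htree.2.1]
  intro g hg hgv
  exact retic_not_tl (hgv ▸ (hC.retE g hg).2) (Or.inl htree)

end MLAux
namespace MLAux
open Net Relation List

variable {X : Type} {N : Net X} {E : Finset (ℕ × ℕ)}

/-- the NE edge relation -/
def NER (N : Net X) (E : Finset (ℕ × ℕ)) : ℕ → ℕ → Prop := fun a b => (a, b) ∈ NEs N E

lemma NER_edge {a b : ℕ} (h : NER N E a b) : N.Edge a b := NEs_sub h

/-! ### chain surgery -/

lemma eq_nil_or_append (l : List ℕ) : l = [] ∨ ∃ l' a, l = l' ++ [a] := by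
  rcases List.eq_nil_or_concat l with h | ⟨l', a, h⟩
  · exact Or.inl h
  · exact Or.inr ⟨l', a, by rw [h, List.concat_eq_append]⟩

lemma chain_first {R : ℕ → ℕ → Prop} {a b : ℕ} {l : List ℕ}
    (h : Chain' R (a :: l ++ [b])) :
    ∃ z, R a z ∧ ((l = [] ∧ z = b) ∨ ∃ t, l = z :: t) := by
  cases l with
  | nil => exact ⟨b, (List.chain'_cons.1 h).1, Or.inl ⟨rfl, rfl⟩⟩
  | cons c t => exact ⟨c, (List.chain'_cons.1 h).1, Or.inr ⟨t, rfl⟩⟩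

lemma chain_last' {R : ℕ → ℕ → Prop} {a b q : ℕ} {l : List ℕ}
    (h : Chain' R (a :: (l ++ [q]) ++ [b])) : R q b := by
  have heq : a :: (l ++ [q]) ++ [b] = (a :: l ++ [q]) ++ [b] := by simp
  rw [heq, List.chain'_append] at h
  refine h.2.2 q ?_ b (by simp)
  rw [show a :: l ++ [q] = (a :: l) ++ [q] from rfl, List.getLast?_concat]; rfl

lemma chain_init {R : ℕ → ℕ → Prop} {a b q : ℕ} {l : List ℕ}
    (h : Chain' R (a :: (l ++ [q]) ++ [b])) : Chain' R (a :: l ++ [q]) := by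
  have heq : a :: (l ++ [q]) ++ [b] = (a :: l ++ [q]) ++ [b] := by simp
  rw [heq, List.chain'_append] at h
  exact h.1

lemma chain_last {R : ℕ → ℕ → Prop} {a b : ℕ} {l : List ℕ}
    (h : Chain' R (a :: l ++ [b])) :
    ∃ z, R z b ∧ ((l = [] ∧ z = a) ∨ z ∈ l) := by
  rcases eq_nil_or_append l with rfl | ⟨t, q, rfl⟩
  · exact ⟨a, (List.chain'_cons.1 h).1, Or.inl ⟨rfl, rfl⟩⟩
  · exact ⟨q, chain_last' h, Or.inr (by simp)⟩

lemma chain_glue {R : ℕ → ℕ → Prop} {a m b : ℕ} {l1 l2 : List ℕ}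
    (h1 : Chain' R (a :: l1 ++ [m])) (h2 : Chain' R (m :: l2 ++ [b])) :
    Chain' R (a :: (l1 ++ m :: l2) ++ [b]) := by
  have heq : a :: (l1 ++ m :: l2) ++ [b] = (a :: l1 ++ [m]) ++ (l2 ++ [b]) := by simp
  rw [heq, List.chain'_append]
  refine ⟨h1, h2.tail, ?_⟩
  intro xx hx yy hy
  rw [show a :: l1 ++ [m] = (a :: l1) ++ [m] from rfl, List.getLast?_concat] at hx
  simp only [Option.mem_def, Option.some.injEq] at hx
  subst hx
  exact (List.chain'_cons'.1 h2).1 yy hy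

lemma chain_split {R : ℕ → ℕ → Prop} {a b v : ℕ} {l1 l2 : List ℕ}
    (h : Chain' R (a :: (l1 ++ v :: l2) ++ [b])) :
    Chain' R (a :: l1 ++ [v]) ∧ Chain' R (v :: l2 ++ [b]) := by
  have heq : a :: (l1 ++ v :: l2) ++ [b] = (a :: l1) ++ (v :: (l2 ++ [b])) := by simp
  rw [heq, List.chain'_append] at h
  obtain ⟨hA, hB, hj⟩ := h
  refine ⟨?_, hB⟩
  rw [show a :: l1 ++ [v] = (a :: l1) ++ [v] from rfl, List.chain'_append]
  refine ⟨hA, by simp, ?_⟩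
  intro xx hx yy hy
  simp only [List.head?_cons, Option.mem_def, Option.some.injEq] at hy
  subst hy
  exact hj xx hx v (by simp)

/-! ### generic filter uniqueness -/

lemma filter_snd_unique {s : Finset (ℕ × ℕ)} {v a b : ℕ}
    (h : (s.filter fun e => e.2 = v).card = 1) (ha : (a, v) ∈ s) (hb : (b, v) ∈ s) :
    a = b := by
  obtain ⟨e, he⟩ := Finset.card_eq_one.1 h
  have h1 : ((a, v) : ℕ × ℕ) ∈ s.filter fun e => e.2 = v := Finset.mem_filter.2 ⟨ha, rfl⟩
  have h2 : ((b, v) : ℕ × ℕ) ∈ s.filter fun e => e.2 = v := Finset.mem_filter.2 ⟨hb, rfl⟩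
  rw [he, Finset.mem_singleton] at h1 h2
  exact congrArg Prod.fst (h1.trans h2.symm)

lemma filter_fst_unique {s : Finset (ℕ × ℕ)} {v a b : ℕ}
    (h : (s.filter fun e => e.1 = v).card = 1) (ha : (v, a) ∈ s) (hb : (v, b) ∈ s) :
    a = b := by
  obtain ⟨e, he⟩ := Finset.card_eq_one.1 h
  have h1 : ((v, a) : ℕ × ℕ) ∈ s.filter fun e => e.1 = v := Finset.mem_filter.2 ⟨ha, rfl⟩
  have h2 : ((v, b) : ℕ × ℕ) ∈ s.filter fun e => e.1 = v := Finset.mem_filter.2 ⟨hb, rfl⟩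
  rw [he, Finset.mem_singleton] at h1 h2
  exact congrArg Prod.snd (h1.trans h2.symm)

lemma NE_exists_child {v : ℕ} (h : 0 < NEout N E v) : ∃ c, (v, c) ∈ NEs N E := by
  obtain ⟨⟨v', c⟩, he⟩ := Finset.card_pos.1 h
  rw [Finset.mem_filter] at he
  obtain ⟨he1, he2⟩ := he
  obtain rfl : v' = v := he2
  exact ⟨c, he1⟩

lemma retic_of_two_inedges (hNet : N.IsNetwork) {t a b : ℕ}
    (ha : (a, t) ∈ N.edges) (hb : (b, t) ∈ N.edges) (hab : a ≠ b) : N.IsRetic t := by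
  have h2 : 2 ≤ N.indeg t := by
    have hsub : ({(a, t), (b, t)} : Finset (ℕ × ℕ)) ⊆ N.edges.filter fun e => e.2 = t := by
      intro e he
      rcases Finset.mem_insert.1 he with rfl | he
      · exact Finset.mem_filter.2 ⟨ha, rfl⟩
      · rw [Finset.mem_singleton] at he; subst he; exact Finset.mem_filter.2 ⟨hb, rfl⟩
    have hcard : ({(a, t), (b, t)} : Finset (ℕ × ℕ)).card = 2 := by
      rw [Finset.card_insert_of_notMem (by simp [hab]), Finset.card_singleton]
    calc 2 = ({(a, t), (b, t)} : Finset (ℕ × ℕ)).card := hcard.symm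
    _ ≤ _ := Finset.card_le_card hsub
  rcases classify hNet (edge_verts hNet ha).2 with h | h | h | h
  · exfalso; have := h.2.1; omega
  · exfalso; have := h.2.1; omega
  · exfalso; have := h.2.1; omega
  · exact h

/-! ### determinism and non-convergence through removed vertices -/

section DLemmas

variable {D : Finset ℕ}

/-- D-hypothesis: every removed vertex is a deleted-edge endpoint with NE-degrees one -/
def DH (N : Net X) (E : Finset (ℕ × ℕ)) (D : Finset ℕ) : Prop :=
  ∀ z ∈ D, z ∈ VE E ∧ NEin N E z = 1 ∧ NEout N E z = 1

/-- two NE-paths through removed vertices starting at the same surviving vertex with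
distinct first steps can never meet -/
lemma no_converge (hC : Ctx N E) (hD : DH N E D) {v : ℕ} (hv : v ∉ D) :
    ∀ n (l1 l2 : List ℕ) (t : ℕ), l1.length + l2.length ≤ n →
      (∀ z ∈ l1, z ∈ D) → (∀ z ∈ l2, z ∈ D) →
      Chain' (NER N E) (v :: l1 ++ [t]) → Chain' (NER N E) (v :: l2 ++ [t]) →
      (l1 ++ [t]).head? ≠ (l2 ++ [t]).head? → False := by
  intro n
  induction n with
  | zero =>
    intro l1 l2 t hlen h1 h2 hc1 hc2 hne
    have e1 : l1 = [] := List.length_eq_zero_iff.1 (by omega)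
    have e2 : l2 = [] := List.length_eq_zero_iff.1 (by omega)
    subst e1; subst e2; exact hne rfl
  | succ n ih =>
    intro l1 l2 t hlen hm1 hm2 hc1 hc2 hne
    rcases eq_nil_or_append l1 with rfl | ⟨l1', q1, rfl⟩
    · rcases eq_nil_or_append l2 with rfl | ⟨l2', q2, rfl⟩
      · exact hne rfl
      · have hvt : NER N E v t := (List.chain'_cons.1 hc1).1
        have hq2 : NER N E q2 t := chain_last' hc2
        have hq2D : q2 ∈ D := hm2 q2 (by simp)
        have hvq : v ≠ q2 := fun h => hv (h ▸ hq2D)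
        exact IK hC (hD q2 hq2D).1 hq2 (retic_of_two_inedges hC.net (NER_edge hvt) (NER_edge hq2) hvq)
    · rcases eq_nil_or_append l2 with rfl | ⟨l2', q2, rfl⟩
      · have hvt : NER N E v t := (List.chain'_cons.1 hc2).1
        have hq1 : NER N E q1 t := chain_last' hc1
        have hq1D : q1 ∈ D := hm1 q1 (by simp)
        have hvq : v ≠ q1 := fun h => hv (h ▸ hq1D)
        exact IK hC (hD q1 hq1D).1 hq1 (retic_of_two_inedges hC.net (NER_edge hvt) (NER_edge hq1) hvq)
      · have hq1 : NER N E q1 t := chain_last' hc1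
        have hq2 : NER N E q2 t := chain_last' hc2
        have hq1D : q1 ∈ D := hm1 q1 (by simp)
        have hq2D : q2 ∈ D := hm2 q2 (by simp)
        by_cases hq : q1 = q2
        · subst hq
          -- unique NE-parent of q1
          have hin : NEin N E q1 = 1 := (hD q1 hq1D).2.1
          have hI1 := chain_init hc1
          have hI2 := chain_init hc2
          obtain ⟨z1, hz1, hor1⟩ := chain_last hI1
          obtain ⟨z2, hz2, hor2⟩ := chain_last hI2
          have hz12 : z1 = z2 := filter_snd_unique hin hz1 hz2
          rcases hor1 with ⟨he1, rfl⟩ | hmem1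
          · rcases hor2 with ⟨he2, rfl⟩ | hmem2
            · subst he1; subst he2
              exact hne rfl
            · exact hv (hz12 ▸ hm2 z2 (List.mem_append.2 (Or.inl hmem2)))
          · rcases hor2 with ⟨he2, rfl⟩ | hmem2
            · exact hv (hz12.symm ▸ hm1 z1 (List.mem_append.2 (Or.inl hmem1)))
            · -- recurse
              have hlen' : l1'.length + l2'.length ≤ n := by
                simp only [List.length_append, List.length_cons] at hlen; omega
              refine ih l1' l2' q1 hlen' (fun z hz => hm1 z (by simp [hz]))
                (fun z hz => hm2 z (by simp [hz])) hI1 hI2 ?_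
              intro hh
              apply hne
              rcases eq_nil_or_append l1' with rfl | ⟨s1, w1, rfl⟩ <;>
                rcases eq_nil_or_append l2' with rfl | ⟨s2, w2, rfl⟩ <;>
                  simp_all [List.head?_append]
        · exact IK hC (hD q1 hq1D).1 hq1 (retic_of_two_inedges hC.net (NER_edge hq1) (NER_edge hq2) hq)

/-- forward determinism: NE-paths through removed vertices from a removed vertex
have a unique surviving endpoint -/
lemma desc_unique (hC : Ctx N E) (hD : DH N E D) :
    ∀ n (l1 l2 : List ℕ) (h x y : ℕ), h ∈ D → x ∉ D → y ∉ D →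
      l1.length + l2.length ≤ n →
      (∀ z ∈ l1, z ∈ D) → (∀ z ∈ l2, z ∈ D) →
      Chain' (NER N E) (h :: l1 ++ [x]) → Chain' (NER N E) (h :: l2 ++ [y]) → x = y := by
  intro n
  induction n with
  | zero =>
    intro l1 l2 h x y hh hx hy hlen hm1 hm2 hc1 hc2
    have e1 : l1 = [] := List.length_eq_zero_iff.1 (by omega)
    have e2 : l2 = [] := List.length_eq_zero_iff.1 (by omega)
    subst e1; subst e2
    exact filter_fst_unique (hD h hh).2.2 (List.chain'_cons.1 hc1).1 (List.chain'_cons.1 hc2).1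
  | succ n ih =>
    intro l1 l2 h x y hh hx hy hlen hm1 hm2 hc1 hc2
    have hout : NEout N E h = 1 := (hD h hh).2.2
    cases l1 with
    | nil =>
      cases l2 with
      | nil =>
        exact filter_fst_unique hout (List.chain'_cons.1 hc1).1 (List.chain'_cons.1 hc2).1
      | cons c2 t2 =>
        exfalso
        have h1 : NER N E h x := (List.chain'_cons.1 hc1).1
        have h2 : NER N E h c2 := (List.chain'_cons.1 hc2).1
        have : x = c2 := filter_fst_unique hout h1 h2
        exact hx (this ▸ hm2 c2 (by simp))
    | cons c1 t1 =>
      cases l2 with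
      | nil =>
        exfalso
        have h1 : NER N E h c1 := (List.chain'_cons.1 hc1).1
        have h2 : NER N E h y := (List.chain'_cons.1 hc2).1
        have : y = c1 := filter_fst_unique hout h2 h1
        exact hy (this ▸ hm1 c1 (by simp))
      | cons c2 t2 =>
        have h1 : NER N E h c1 := (List.chain'_cons.1 hc1).1
        have h2 : NER N E h c2 := (List.chain'_cons.1 hc2).1
        have hcc : c1 = c2 := filter_fst_unique hout h1 h2
        subst hcc
        have hlen' : t1.length + t2.length ≤ n := by
          simp only [List.length_cons] at hlen; omega
        exact ih t1 t2 c1 x y (hm1 c1 (by simp)) hx hy hlen'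
          (fun z hz => hm1 z (by simp [hz])) (fun z hz => hm2 z (by simp [hz]))
          hc1.tail hc2.tail

/-- descent through removed vertices to a surviving vertex -/
lemma desc_exists (hC : Ctx N E) (hD : DH N E D) :
    ∀ c ∈ N.verts, c ∈ D →
      ∃ (l : List ℕ) (t : ℕ), (∀ z ∈ l, z ∈ D) ∧ t ∉ D ∧ t ∈ N.verts ∧
        Chain' (NER N E) (c :: l ++ [t]) := by
  suffices H : ∀ m, ∀ c ∈ N.verts, c ∈ D →
      (N.verts.filter fun w => Relation.TransGen N.Edge c w).card < m →
      ∃ (l : List ℕ) (t : ℕ), (∀ z ∈ l, z ∈ D) ∧ t ∉ D ∧ t ∈ N.verts ∧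
        Chain' (NER N E) (c :: l ++ [t]) by
    intro c hcv hcD
    exact H (_ + 1) c hcv hcD (Nat.lt_succ_self _)
  intro m
  induction m with
  | zero => intro c _ _ h; omega
  | succ m ih =>
    intro c hcv hcD hcard
    have hout : NEout N E c = 1 := (hD c hcD).2.2
    obtain ⟨c', hc'⟩ := NE_exists_child (by rw [hout]; exact Nat.one_pos)
    have hc'e : N.Edge c c' := NER_edge hc'
    have hc'v : c' ∈ N.verts := (edge_verts hC.net hc'e).2
    by_cases hc'D : c' ∈ D
    · have hsub : (N.verts.filter fun w => Relation.TransGen N.Edge c' w) ⊂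
          (N.verts.filter fun w => Relation.TransGen N.Edge c w) := by
        constructor
        · intro w hw
          rw [Finset.mem_filter] at hw ⊢
          exact ⟨hw.1, Relation.TransGen.head hc'e hw.2⟩
        · intro hsub'
          have : c' ∈ N.verts.filter fun w => Relation.TransGen N.Edge c w :=
            Finset.mem_filter.2 ⟨hc'v, Relation.TransGen.single hc'e⟩
          have := hsub' this
          rw [Finset.mem_filter] at this
          exact no_cycle hC.net c' this.2
      have := Finset.card_lt_card hsub
      obtain ⟨l', t, hl', ht, htv, hch⟩ := ih c' hc'v hc'D (by omega)
      refine ⟨c' :: l', t, ?_, ht, htv, ?_⟩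
      · intro z hz
        rcases List.mem_cons.1 hz with rfl | hz'
        · exact hc'D
        · exact hl' z hz'
      · exact List.chain'_cons.2 ⟨hc', hch⟩
    · exact ⟨[], c', by simp, hc'D, hc'v, List.chain'_pair.2 hc'⟩

end DLemmas
end MLAux
namespace MLAux
open Net Relation List

variable {X : Type} {N : Net X} {E : Finset (ℕ × ℕ)} {D : Finset ℕ}

/-! ### contracted edges -/

def cEdges (N : Net X) (E : Finset (ℕ × ℕ)) (D : Finset ℕ) : Finset (ℕ × ℕ) :=
  (N.verts ×ˢ N.verts).filter fun ab =>
    ab.1 ∉ D ∧ ab.2 ∉ D ∧ ∃ l : List ℕ, (∀ z ∈ l, z ∈ D) ∧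
      Chain' (NER N E) (ab.1 :: l ++ [ab.2])

lemma mem_cEdges {a b : ℕ} :
    (a, b) ∈ cEdges N E D ↔ (a ∈ N.verts ∧ b ∈ N.verts) ∧ a ∉ D ∧ b ∉ D ∧
      ∃ l, (∀ z ∈ l, z ∈ D) ∧ Chain' (NER N E) (a :: l ++ [b]) := by
  unfold cEdges
  rw [Finset.mem_filter, Finset.mem_product]

lemma cEdges_empty (hNet : N.IsNetwork) : cEdges N E ∅ = NEs N E := by
  ext ⟨a, b⟩
  rw [mem_cEdges]
  constructor
  · rintro ⟨_, _, _, l, hl, hch⟩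
    have hln : l = [] := List.eq_nil_iff_forall_not_mem.2 fun z hz => by simpa using hl z hz
    subst hln
    exact List.chain'_pair.1 hch
  · intro h
    have he := edge_verts hNet (NEs_sub h)
    exact ⟨⟨he.1, he.2⟩, by simp, by simp, [], by simp, List.chain'_pair.2 h⟩

lemma cEdges_irrefl (hNet : N.IsNetwork) {a : ℕ} : (a, a) ∉ cEdges N E D := by
  rw [mem_cEdges]
  rintro ⟨_, _, _, l, hl, hch⟩
  have hch' : Chain' N.Edge ((a :: l) ++ [a]) :=
    List.Chain'.imp (fun _ _ h => NER_edge h) hch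
  exact no_cycle hNet a (chain_mem_transGen hch' (by simp))

lemma head_start {l : List ℕ} {t c : ℕ} (h : l = [] ∧ t = c ∨ ∃ l', l = c :: l') :
    (l ++ [t]).head? = some c := by
  rcases h with ⟨rfl, rfl⟩ | ⟨l', rfl⟩ <;> simp

/-- from an NE-edge out of a surviving vertex we get a contracted edge -/
lemma cEdges_of_NE (hC : Ctx N E) (hD : DH N E D) {v c : ℕ} (hv : v ∈ N.verts) (hvD : v ∉ D)
    (hvc : (v, c) ∈ NEs N E) :
    ∃ t l, t ∉ D ∧ (∀ z ∈ l, z ∈ D) ∧ Chain' (NER N E) (v :: l ++ [t]) ∧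
      (l = [] ∧ t = c ∨ ∃ l', l = c :: l') ∧ (v, t) ∈ cEdges N E D := by
  have hcv : c ∈ N.verts := (edge_verts hC.net (NEs_sub hvc)).2
  by_cases hcD : c ∈ D
  · obtain ⟨l', t, hl', ht, htv, hch⟩ := desc_exists hC hD c hcv hcD
    have hch2 : Chain' (NER N E) (v :: (c :: l') ++ [t]) :=
      List.chain'_cons.2 ⟨hvc, hch⟩
    have hmem : ∀ z ∈ c :: l', z ∈ D := by
      intro z hz
      rcases List.mem_cons.1 hz with rfl | hz'
      · exact hcD
      · exact hl' z hz'
    exact ⟨t, c :: l', ht, hmem, hch2, Or.inr ⟨l', rfl⟩,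
      mem_cEdges.2 ⟨⟨hv, htv⟩, hvD, ht, c :: l', hmem, hch2⟩⟩
  · exact ⟨c, [], hcD, by simp, List.chain'_pair.2 hvc, Or.inl ⟨rfl, rfl⟩,
      mem_cEdges.2 ⟨⟨hv, hcv⟩, hvD, hcD, [], by simp, List.chain'_pair.2 hvc⟩⟩

lemma exists_two_children {v : ℕ} (h : N.outdeg v = 2) :
    ∃ a b, a ≠ b ∧ (v, a) ∈ N.edges ∧ (v, b) ∈ N.edges := by
  obtain ⟨e1, e2, hne, hset⟩ :=
    Finset.card_eq_two.1 (show (N.edges.filter fun e => e.1 = v).card = 2 from h)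
  have hmem : ∀ e ∈ ({e1, e2} : Finset (ℕ × ℕ)), e ∈ N.edges ∧ e.1 = v := by
    intro e he; rw [← hset] at he; exact Finset.mem_filter.1 he
  obtain ⟨h1e, h1v⟩ := hmem e1 (by simp)
  obtain ⟨h2e, h2v⟩ := hmem e2 (by simp)
  refine ⟨e1.2, e2.2, ?_, ?_, ?_⟩
  · intro hss; exact hne (Prod.ext (h1v.trans h2v.symm) hss)
  · rw [show (v, e1.2) = e1 from Prod.ext h1v.symm rfl]; exact h1e
  · rw [show (v, e2.2) = e2 from Prod.ext h2v.symm rfl]; exact h2e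

lemma exists_two_parents {v : ℕ} (h : N.indeg v = 2) :
    ∃ a b, a ≠ b ∧ (a, v) ∈ N.edges ∧ (b, v) ∈ N.edges := by
  obtain ⟨e1, e2, hne, hset⟩ :=
    Finset.card_eq_two.1 (show (N.edges.filter fun e => e.2 = v).card = 2 from h)
  have hmem : ∀ e ∈ ({e1, e2} : Finset (ℕ × ℕ)), e ∈ N.edges ∧ e.2 = v := by
    intro e he; rw [← hset] at he; exact Finset.mem_filter.1 he
  obtain ⟨h1e, h1v⟩ := hmem e1 (by simp)
  obtain ⟨h2e, h2v⟩ := hmem e2 (by simp)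
  refine ⟨e1.1, e2.1, ?_, ?_, ?_⟩
  · intro hss; exact hne (Prod.ext hss (h1v.trans h2v.symm))
  · rw [show (e1.1, v) = e1 from Prod.ext rfl h1v.symm]; exact h1e
  · rw [show (e2.1, v) = e2 from Prod.ext rfl h2v.symm]; exact h2e

lemma exists_NE_child_of_unlabeled (hC : Ctx N E) {v : ℕ} (hv : v ∈ N.verts)
    (hlab : N.lab v = none) : ∃ c, (v, c) ∈ NEs N E := by
  have hnl : ¬ N.IsLeaf v := fun hl => by
    obtain ⟨xx, hxx⟩ := (hC.net.2.2.2.2.1 v).2 hl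
    rw [hlab] at hxx; cases hxx
  rcases classify hC.net hv with h | h | h | h
  · obtain ⟨c, hc⟩ := exists_child (v := v) (by rw [h.2.2]; omega)
    refine ⟨c, mem_NEs.2 ⟨hc, fun hE => ?_⟩⟩
    have h1 := (Efst_tree hC hE).2.1
    simp only at h1
    rw [h.2.1] at h1
    omega
  · exact absurd h hnl
  · obtain ⟨a, b, hab, ha, hb⟩ := exists_two_children h.2.2
    by_cases haE : (v, a) ∈ E
    · by_cases hbE : (v, b) ∈ E
      · exfalso
        obtain ⟨c, hc, hctl⟩ := hC.tc v hv hnl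
        rcases two_children h.2.2 ha hb hab c hc with rfl | rfl
        · exact retic_not_tl (hC.retE _ haE).2 hctl
        · exact retic_not_tl (hC.retE _ hbE).2 hctl
      · exact ⟨b, mem_NEs.2 ⟨hb, hbE⟩⟩
    · exact ⟨a, mem_NEs.2 ⟨ha, haE⟩⟩
  · obtain ⟨c, hc, hctl, _⟩ := retic_child hC h
    exact ⟨c, mem_NEs.2 ⟨hc, fun hE => retic_not_tl (hC.retE _ hE).2 hctl⟩⟩

/-! ### the invariant -/

structure Inv (N : Net X) (E : Finset (ℕ × ℕ)) (Nc : Net X) (D : Finset ℕ) : Prop where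
  hverts : Nc.verts = N.verts \ D
  hedges : Nc.edges = cEdges N E D
  hlab : Nc.lab = N.lab
  hDH : DH N E D

lemma inv_base (hNet : N.IsNetwork) : Inv N E (N.deleteEdges E) ∅ := by
  refine ⟨by simp [Net.deleteEdges], ?_, rfl, fun z hz => absurd hz (by simp)⟩
  show N.edges \ E = cEdges N E ∅
  rw [cEdges_empty hNet]; rfl

lemma inv_step (hC : Ctx N E) {Nc Nd : Net X} {D : Finset ℕ} (hI : Inv N E Nc D)
    (hs : CleanStep Nc Nd) : ∃ D', Inv N E Nd D' := by
  obtain ⟨hverts, hedges, hlab, hD⟩ := hI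
  cases hs with
  | delNode v hv h0 hlabv =>
    exfalso
    rw [hverts, Finset.mem_sdiff] at hv
    obtain ⟨hvN, hvD⟩ := hv
    have hlabN : N.lab v = none := by rw [← hlab]; exact hlabv
    obtain ⟨c, hc⟩ := exists_NE_child_of_unlabeled hC hvN hlabN
    obtain ⟨t, l, _, _, _, _, hmem⟩ := cEdges_of_NE hC hD hvN hvD hc
    have : (v, t) ∈ Nc.edges := by rw [hedges]; exact hmem
    have := outdeg_pos this
    omega
  | suppress u v w h1 h2 hu hw =>
    have huc : (u, v) ∈ cEdges N E D := by rw [← hedges]; exact hu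
    have hwc : (v, w) ∈ cEdges N E D := by rw [← hedges]; exact hw
    obtain ⟨⟨huN, hvN⟩, huD, hvD, lu, hlu, hchu⟩ := mem_cEdges.1 huc
    obtain ⟨⟨_, hwN⟩, _, hwD, lw, hlw, hchw⟩ := mem_cEdges.1 hwc
    have huv : u ≠ v := fun h => cEdges_irrefl hC.net (h ▸ huc)
    have hwv : w ≠ v := fun h => cEdges_irrefl hC.net (h ▸ hwc)
    -- v is a deleted-edge endpoint with NE-degrees one
    have hkey : v ∈ VE E ∧ NEin N E v = 1 ∧ NEout N E v = 1 := by
      rcases classify hC.net hvN with h | h | h | h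
      · -- root: has an in-edge
        exfalso
        obtain ⟨z, hz, _⟩ := chain_last hchu
        have := indeg_pos (NER_edge hz)
        rw [h.2.1] at this; omega
      · -- leaf: has an out-edge
        exfalso
        obtain ⟨z, hz, _⟩ := chain_first hchw
        have := outdeg_pos (NER_edge hz)
        rw [h.2.2] at this; omega
      · -- tree node
        have hVE : v ∈ VE E := by
          by_contra hVE
          have hnotE : ∀ z, (v, z) ∈ N.edges → (v, z) ∈ NEs N E := by
            intro z hz
            refine mem_NEs.2 ⟨hz, fun hzE => hVE (mem_VE.2 ⟨(v, z), hzE, Or.inl rfl⟩)⟩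
          obtain ⟨a, b, hab, ha, hb⟩ := exists_two_children h.2.2
          obtain ⟨t1, la, ht1, hla, hcha, hsha, hm1⟩ :=
            cEdges_of_NE hC hD hvN hvD (hnotE a ha)
          obtain ⟨t2, lb, ht2, hlb, hchb, hshb, hm2⟩ :=
            cEdges_of_NE hC hD hvN hvD (hnotE b hb)
          have ht12 : t1 ≠ t2 := by
            intro hteq
            subst hteq
            refine no_converge hC hD hvD (la.length + lb.length) la lb t1 le_rfl hla hlb
              hcha hchb ?_
            rw [head_start hsha, head_start hshb]
            simp [hab]
          have hsub : ({(v, t1), (v, t2)} : Finset (ℕ × ℕ)) ⊆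
              Nc.edges.filter fun e => e.1 = v := by
            intro e he
            rcases Finset.mem_insert.1 he with rfl | he
            · exact Finset.mem_filter.2 ⟨by rw [hedges]; exact hm1, rfl⟩
            · rw [Finset.mem_singleton] at he; subst he
              exact Finset.mem_filter.2 ⟨by rw [hedges]; exact hm2, rfl⟩
          have hcard : ({(v, t1), (v, t2)} : Finset (ℕ × ℕ)).card = 2 := by
            rw [Finset.card_insert_of_notMem (by simp [ht12]), Finset.card_singleton]
          have := Finset.card_le_card hsub
          rw [hcard] at this
          have h2' : (Nc.edges.filter fun e => e.1 = v).card = 1 := h2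
          omega
        obtain ⟨e, he, hor⟩ := mem_VE.1 hVE
        rcases hor with rfl | rfl
        · exact ⟨hVE, Efst_NEin_one hC he, VE_NEout_one hC hVE⟩
        · exfalso
          have := (hC.retE e he).2.2.1
          have := h.2.1
          omega
      · -- reticulation
        have hVE : v ∈ VE E := by
          by_contra hVE
          have hnotE : ∀ z, (z, v) ∈ N.edges → (z, v) ∈ NEs N E := by
            intro z hz
            refine mem_NEs.2 ⟨hz, fun hzE => hVE (mem_VE.2 ⟨(z, v), hzE, Or.inr rfl⟩)⟩
          obtain ⟨a, b, hab, ha, hb⟩ := exists_two_parents h.2.1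
          have haD : a ∉ D := fun haD => IK hC (hD a haD).1 (hnotE a ha) h
          have hbD : b ∉ D := fun hbD => IK hC (hD b hbD).1 (hnotE b hb) h
          have hm1 : (a, v) ∈ cEdges N E D :=
            mem_cEdges.2 ⟨⟨(edge_verts hC.net ha).1, hvN⟩, haD, hvD, [], by simp,
              List.chain'_pair.2 (hnotE a ha)⟩
          have hm2 : (b, v) ∈ cEdges N E D :=
            mem_cEdges.2 ⟨⟨(edge_verts hC.net hb).1, hvN⟩, hbD, hvD, [], by simp,
              List.chain'_pair.2 (hnotE b hb)⟩
          have hsub : ({(a, v), (b, v)} : Finset (ℕ × ℕ)) ⊆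
              Nc.edges.filter fun e => e.2 = v := by
            intro e he
            rcases Finset.mem_insert.1 he with rfl | he
            · exact Finset.mem_filter.2 ⟨by rw [hedges]; exact hm1, rfl⟩
            · rw [Finset.mem_singleton] at he; subst he
              exact Finset.mem_filter.2 ⟨by rw [hedges]; exact hm2, rfl⟩
          have hcard : ({(a, v), (b, v)} : Finset (ℕ × ℕ)).card = 2 := by
            rw [Finset.card_insert_of_notMem (by simp [hab]), Finset.card_singleton]
          have := Finset.card_le_card hsub
          rw [hcard] at this
          have h1' : (Nc.edges.filter fun e => e.2 = v).card = 1 := h1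
          omega
        obtain ⟨e, he, hor⟩ := mem_VE.1 hVE
        have heq : v = e.2 := by
          rcases hor with rfl | h'
          · exfalso
            have := (Efst_tree hC he).2.1
            have := h.2.1
            omega
          · exact h'
        refine ⟨hVE, ?_, VE_NEout_one hC hVE⟩
        -- NEin v = 1
        obtain ⟨z, hz, _⟩ := chain_last hchu
        have hzD : z ∉ D := fun hzD => IK hC (hD z hzD).1 hz h
        obtain ⟨β, hβne, hβ, hall⟩ := other_parent h.2.1
          (show (e.1, v) ∈ N.edges by rw [heq, Prod.mk.eta]; exact (hC.retE e he).1)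
        have hsub : ((NEs N E).filter fun f => f.2 = v) ⊆ {(β, v)} := by
          intro ⟨z1, v1⟩ hf
          rw [Finset.mem_filter] at hf
          obtain ⟨hf1, hf2⟩ := hf
          obtain rfl : v1 = v := hf2
          rw [Finset.mem_singleton]
          rcases hall z1 (mem_NEs.1 hf1).1 with rfl | rfl
          · exfalso
            exact (mem_NEs.1 hf1).2 (by rw [heq, Prod.mk.eta]; exact he)
          · rfl
        have hge : 0 < NEin N E v := Finset.card_pos.2 ⟨(z, v), Finset.mem_filter.2 ⟨hz, rfl⟩⟩
        have hle := Finset.card_le_card hsub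
        rw [Finset.card_singleton] at hle
        unfold NEin at hge ⊢
        omega
    obtain ⟨hvVE, hvin, hvout⟩ := hkey
    refine ⟨insert v D, ?_, ?_, hlab, ?_⟩
    · show Nc.verts.erase v = N.verts \ insert v D
      rw [hverts]
      ext z
      simp only [Finset.mem_erase, Finset.mem_sdiff, Finset.mem_insert]
      tauto
    · show insert (u, w) (Nc.edges.filter fun e => e.1 ≠ v ∧ e.2 ≠ v) = cEdges N E (insert v D)
      ext ⟨a, b⟩
      constructor
      · intro hab
        rcases Finset.mem_insert.1 hab with hab' | hab'
        · injection hab' with hfst hsnd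
          subst hfst; subst hsnd
          refine mem_cEdges.2 ⟨⟨huN, hwN⟩, by simp [huv, huD], by simp [hwv, hwD],
            lu ++ v :: lw, ?_, chain_glue hchu hchw⟩
          intro z hz
          rcases List.mem_append.1 hz with hz' | hz'
          · exact Finset.mem_insert.2 (Or.inr (hlu z hz'))
          · rcases List.mem_cons.1 hz' with rfl | hz''
            · exact Finset.mem_insert_self _ _
            · exact Finset.mem_insert.2 (Or.inr (hlw z hz''))
        · rw [Finset.mem_filter] at hab'
          obtain ⟨habe, hane, hbne⟩ := hab'
          rw [hedges] at habe
          obtain ⟨⟨haN, hbN⟩, haD, hbD, l, hl, hch⟩ := mem_cEdges.1 habe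
          exact mem_cEdges.2 ⟨⟨haN, hbN⟩, by simp [hane, haD], by simp [hbne, hbD],
            l, fun z hz => Finset.mem_insert.2 (Or.inr (hl z hz)), hch⟩
      · intro hab
        obtain ⟨⟨haN, hbN⟩, haD, hbD, l, hl, hch⟩ := mem_cEdges.1 hab
        simp only [Finset.mem_insert, not_or] at haD hbD
        by_cases hvl : v ∈ l
        · obtain ⟨l1, l2, rfl⟩ := List.append_of_mem hvl
          obtain ⟨ch1, ch2⟩ := chain_split hch
          have hnd1 : ((a :: l1) ++ [v]).Nodup :=
            chain_nodup hC.net (List.Chain'.imp (fun _ _ h => NER_edge h) ch1)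
          have hnd2 : ((v :: l2) ++ [b]).Nodup :=
            chain_nodup hC.net (List.Chain'.imp (fun _ _ h => NER_edge h) ch2)
          have hvl1 : v ∉ l1 := by
            intro hmem
            have := (List.nodup_append.1 hnd1).2.2
            exact this v (List.mem_cons.2 (Or.inr hmem)) v (by simp) rfl
          have hvl2 : v ∉ l2 := by
            have := (List.nodup_append.1 hnd2).1
            intro hmem
            exact (List.nodup_cons.1 this).1 hmem
          have hl1D : ∀ z ∈ l1, z ∈ D := by
            intro z hz
            rcases Finset.mem_insert.1 (hl z (by simp [hz])) with rfl | h'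
            · exact absurd hz hvl1
            · exact h'
          have hl2D : ∀ z ∈ l2, z ∈ D := by
            intro z hz
            rcases Finset.mem_insert.1 (hl z (by simp [hz])) with rfl | h'
            · exact absurd hz hvl2
            · exact h'
          have hav : (a, v) ∈ Nc.edges := by
            rw [hedges]
            exact mem_cEdges.2 ⟨⟨haN, hvN⟩, haD.2, hvD, l1, hl1D, ch1⟩
          have hvb : (v, b) ∈ Nc.edges := by
            rw [hedges]
            exact mem_cEdges.2 ⟨⟨hvN, hbN⟩, hvD, hbD.2, l2, hl2D, ch2⟩
          have hau : a = u := filter_snd_unique h1 hav hu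
          have hbw : b = w := filter_fst_unique h2 hvb hw
          subst hau; subst hbw
          exact Finset.mem_insert_self _ _
        · have hlD : ∀ z ∈ l, z ∈ D := by
            intro z hz
            rcases Finset.mem_insert.1 (hl z hz) with rfl | h'
            · exact absurd hz hvl
            · exact h'
          refine Finset.mem_insert.2 (Or.inr (Finset.mem_filter.2 ⟨?_, haD.1, hbD.1⟩))
          rw [hedges]
          exact mem_cEdges.2 ⟨⟨haN, hbN⟩, haD.2, hbD.2, l, hlD, hch⟩
    · intro z hz
      rcases Finset.mem_insert.1 hz with rfl | hz'
      · exact ⟨hvVE, hvin, hvout⟩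
      · exact hD z hz'

lemma inv_rtg (hC : Ctx N E) {Nc : Net X}
    (h : Relation.ReflTransGen CleanStep (N.deleteEdges E) Nc) : ∃ D, Inv N E Nc D := by
  induction h with
  | refl => exact ⟨∅, inv_base hC.net⟩
  | tail _ hstep ih =>
    obtain ⟨D, hD⟩ := ih
    exact inv_step hC hD hstep

end MLAux
namespace MLAux
open Net Relation List

variable {X : Type} {N : Net X}

/-! ### ConnectedIn utilities -/

lemma adj_symm {a b : ℕ} (h : N.Adj a b) : N.Adj b a := Or.symm h

lemma adj_irrefl (hNet : N.IsNetwork) {a : ℕ} : ¬ N.Adj a a := by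
  rintro (h | h) <;> exact edge_irrefl hNet h

lemma ci_mono {S T : Finset ℕ} (hST : S ⊆ T) {a b : ℕ} (h : N.ConnectedIn S a b) :
    N.ConnectedIn T a b :=
  Relation.ReflTransGen.mono (r := fun a b => a ∈ S ∧ b ∈ S ∧ N.Adj a b)
    (p := fun a b => a ∈ T ∧ b ∈ T ∧ N.Adj a b)
    (by intro x y hxy; exact ⟨hST hxy.1, hST hxy.2.1, hxy.2.2⟩) a b h

lemma ci_symm {S : Finset ℕ} {a b : ℕ} (h : N.ConnectedIn S a b) : N.ConnectedIn S b a := by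
  induction h with
  | refl => exact Relation.ReflTransGen.refl
  | tail _ hbc ih =>
    exact Relation.ReflTransGen.head ⟨hbc.2.1, hbc.1, adj_symm hbc.2.2⟩ ih

lemma ci_single {S : Finset ℕ} {a b : ℕ} (ha : a ∈ S) (hb : b ∈ S) (h : N.Adj a b) :
    N.ConnectedIn S a b := Relation.ReflTransGen.single ⟨ha, hb, h⟩

lemma chain_ci {S : Finset ℕ} :
    ∀ {l : List ℕ} {a : ℕ}, Chain' N.Adj (a :: l) → (∀ z ∈ a :: l, z ∈ S) →
      ∀ b ∈ a :: l, N.ConnectedIn S a b := by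
  intro l
  induction l with
  | nil =>
    intro a _ _ b hb
    rcases List.mem_cons.1 hb with rfl | hb'
    · exact Relation.ReflTransGen.refl
    · simp at hb'
  | cons c t ih =>
    intro a hch hmem b hb
    rcases List.mem_cons.1 hb with rfl | hb'
    · exact Relation.ReflTransGen.refl
    · have step : N.ConnectedIn S a c :=
        ci_single (hmem a (by simp)) (hmem c (by simp)) (List.chain'_cons.1 hch).1
      exact step.trans (ih (List.chain'_cons.1 hch).2 (fun z hz => hmem z (by simp [hz])) b hb')

lemma chain_ci_pair {S : Finset ℕ} {l : List ℕ} {a b1 b2 : ℕ} (hch : Chain' N.Adj (a :: l))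
    (hmem : ∀ z ∈ a :: l, z ∈ S) (h1 : b1 ∈ a :: l) (h2 : b2 ∈ a :: l) :
    N.ConnectedIn S b1 b2 :=
  (ci_symm (chain_ci hch hmem b1 h1)).trans (chain_ci hch hmem b2 h2)

/-! ### biconnected-set utilities -/

lemma exists_neighbor (hNet : N.IsNetwork) {S : Finset ℕ} {v : ℕ}
    (hS : N.BiconnectedSet S) (hv : v ∈ S) : ∃ z ∈ S, N.Adj v z ∧ z ≠ v := by
  obtain ⟨hcard, _, hconn, _⟩ := hS
  obtain ⟨w, hw, hwv⟩ := Finset.exists_mem_ne (s := S) (by omega) v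
  rcases Relation.ReflTransGen.cases_head (hconn v hv w hw) with heq | ⟨z, ⟨_, hz2, hz3⟩, _⟩
  · exact absurd heq.symm hwv
  · exact ⟨z, hz2, hz3, fun h => adj_irrefl hNet (h ▸ hz3)⟩

lemma neighbor_in_erase (hNet : N.IsNetwork) {S : Finset ℕ} {c v : ℕ}
    (hS : N.BiconnectedSet S) (hv : v ∈ S) (hc : c ∈ S) (hvc : v ≠ c) :
    ∃ z ∈ S.erase c, N.Adj v z ∧ z ≠ v := by
  obtain ⟨hcard, _, _, hcut⟩ := hS
  have hv' : v ∈ S.erase c := Finset.mem_erase.2 ⟨hvc, hv⟩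
  have hcard' : 1 < (S.erase c).card := by rw [Finset.card_erase_of_mem hc]; omega
  obtain ⟨w, hw, hwv⟩ := Finset.exists_mem_ne hcard' v
  rcases Relation.ReflTransGen.cases_head (hcut c hc v hv' w hw) with heq | ⟨z, ⟨_, hz2, hz3⟩, _⟩
  · exact absurd heq.symm hwv
  · exact ⟨z, hz2, hz3, fun h => adj_irrefl hNet (h ▸ hz3)⟩

lemma biconn_union (hNet : N.IsNetwork) {S T : Finset ℕ}
    (hS : N.BiconnectedSet S) (hT : N.BiconnectedSet T) {c1 c2 : ℕ}
    (h1S : c1 ∈ S) (h1T : c1 ∈ T) (h2S : c2 ∈ S) (h2T : c2 ∈ T) (hne : c1 ≠ c2) :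
    N.BiconnectedSet (S ∪ T) := by
  obtain ⟨cS, sS, connS, cutS⟩ := hS
  obtain ⟨cT, sT, connT, cutT⟩ := hT
  refine ⟨le_trans cS (Finset.card_le_card Finset.subset_union_left),
    Finset.union_subset sS sT, ?_, ?_⟩
  · have hto : ∀ u ∈ S ∪ T, N.ConnectedIn (S ∪ T) u c1 := by
      intro u hu
      rcases Finset.mem_union.1 hu with h | h
      · exact ci_mono Finset.subset_union_left (connS u h c1 h1S)
      · exact ci_mono Finset.subset_union_right (connT u h c1 h1T)
    intro u hu v hv
    exact (hto u hu).trans (ci_symm (hto v hv))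
  · intro c hc u hu v hv
    have hd : ∃ d, d ∈ S ∧ d ∈ T ∧ d ≠ c := by
      by_cases h : c = c1
      · exact ⟨c2, h2S, h2T, fun hh => hne (h ▸ hh.symm)⟩
      · exact ⟨c1, h1S, h1T, fun hh => h hh.symm⟩
    obtain ⟨d, hdS, hdT, hdc⟩ := hd
    have hd' : d ∈ (S ∪ T).erase c := Finset.mem_erase.2 ⟨hdc, Finset.mem_union.2 (Or.inl hdS)⟩
    have hSsub : ∀ {W : Finset ℕ}, W ⊆ S ∪ T → W.erase c ⊆ (S ∪ T).erase c := by
      intro W hW z hz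
      obtain ⟨hzc, hzW⟩ := Finset.mem_erase.1 hz
      exact Finset.mem_erase.2 ⟨hzc, hW hzW⟩
    have hto : ∀ z ∈ (S ∪ T).erase c, N.ConnectedIn ((S ∪ T).erase c) z d := by
      intro z hz
      obtain ⟨hzc, hzU⟩ := Finset.mem_erase.1 hz
      rcases Finset.mem_union.1 hzU with h | h
      · by_cases hcS : c ∈ S
        · exact ci_mono (hSsub Finset.subset_union_left)
            (cutS c hcS z (Finset.mem_erase.2 ⟨hzc, h⟩) d (Finset.mem_erase.2 ⟨hdc, hdS⟩))
        · refine ci_mono ?_ (connS z h d hdS)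
          intro x hx
          exact Finset.mem_erase.2 ⟨fun hxc => hcS (hxc ▸ hx), Finset.mem_union.2 (Or.inl hx)⟩
      · by_cases hcT : c ∈ T
        · exact ci_mono (hSsub Finset.subset_union_right)
            (cutT c hcT z (Finset.mem_erase.2 ⟨hzc, h⟩) d (Finset.mem_erase.2 ⟨hdc, hdT⟩))
        · refine ci_mono ?_ (connT z h d hdT)
          intro x hx
          exact Finset.mem_erase.2 ⟨fun hxc => hcT (hxc ▸ hx), Finset.mem_union.2 (Or.inr hx)⟩
    exact (hto u hu).trans (ci_symm (hto v hv))

lemma exists_blob_containing (hNet : N.IsNetwork) {B : Finset ℕ} (hB : N.BiconnectedSet B) :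
    ∃ T, N.BlobSet T ∧ B ⊆ T := by
  classical
  set fam := N.verts.powerset.filter fun T => B ⊆ T ∧ N.BiconnectedSet T with hfam
  have hBf : B ∈ fam := Finset.mem_filter.2 ⟨Finset.mem_powerset.2 hB.2.1, subset_rfl, hB⟩
  obtain ⟨T, hT, hmax⟩ := Finset.exists_max_image fam Finset.card ⟨B, hBf⟩
  rw [hfam, Finset.mem_filter, Finset.mem_powerset] at hT
  refine ⟨T, ⟨hT.2.2, ?_⟩, hT.2.1⟩
  intro T' hT' hsubT'
  have hT'f : T' ∈ fam :=
    Finset.mem_filter.2 ⟨Finset.mem_powerset.2 hT'.2.1, hT.2.1.trans hsubT', hT'⟩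
  exact Finset.eq_of_subset_of_card_le hsubT' (hmax T' hT'f)

lemma blob_eq_two (hNet : N.IsNetwork) {S T : Finset ℕ} (hS : N.BlobSet S) (hT : N.BlobSet T)
    {c1 c2 : ℕ} (h1S : c1 ∈ S) (h1T : c1 ∈ T) (h2S : c2 ∈ S) (h2T : c2 ∈ T) (hne : c1 ≠ c2) :
    S = T := by
  have hU := biconn_union hNet hS.1 hT.1 h1S h1T h2S h2T hne
  have h1 := hS.2 _ hU Finset.subset_union_left
  have h2 := hT.2 _ hU Finset.subset_union_right
  rw [h1, ← h2]

end MLAux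
namespace MLAux
open Net Relation List

variable {X : Type} {N : Net X}

lemma mem_of_getLast?' {l : List ℕ} {a : ℕ} (h : l.getLast? = some a) : a ∈ l := by
  obtain ⟨hne, rfl⟩ := List.mem_getLast?_eq_getLast (Option.mem_def.2 h)
  exact List.getLast_mem hne

lemma chain_mem_verts (hNet : N.IsNetwork) :
    ∀ {l : List ℕ} {a : ℕ}, Chain' N.Edge (a :: l) → a ∈ N.verts → ∀ z ∈ a :: l, z ∈ N.verts := by
  intro l
  induction l with
  | nil =>
    intro a _ ha z hz
    rcases List.mem_cons.1 hz with rfl | hz'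
    · exact ha
    · simp at hz'
  | cons c t ih =>
    intro a hch ha z hz
    have hac : N.Edge a c := (List.chain'_cons.1 hch).1
    rcases List.mem_cons.1 hz with rfl | hz'
    · exact ha
    · exact ih (List.chain'_cons.1 hch).2 (edge_verts hNet hac).2 z hz'

lemma first_split (p : ℕ → Prop) :
    ∀ (P : List ℕ), (∃ z ∈ P, p z) →
      ∃ pre d suf, P = pre ++ d :: suf ∧ p d ∧ ∀ z ∈ pre, ¬ p z := by
  intro P
  induction P with
  | nil => rintro ⟨z, hz, _⟩; simp at hz
  | cons a t ih =>
    intro hex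
    by_cases hpa : p a
    · exact ⟨[], a, t, rfl, hpa, by simp⟩
    · have hex' : ∃ z ∈ t, p z := by
        obtain ⟨z, hz, hpz⟩ := hex
        rcases List.mem_cons.1 hz with rfl | hz'
        · exact absurd hpz hpa
        · exact ⟨z, hz', hpz⟩
      obtain ⟨pre, d, suf, heq, hpd, hpre⟩ := ih hex'
      refine ⟨a :: pre, d, suf, by rw [heq]; rfl, hpd, ?_⟩
      intro z hz
      rcases List.mem_cons.1 hz with rfl | hz'
      · exact hpa
      · exact hpre z hz'

/-- a cyclically closed nodup Adj-chain of length ≥ 3 is a biconnected set -/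
lemma cycle_biconn (hNet : N.IsNetwork) {L : List ℕ} (hlen : 3 ≤ L.length)
    (hnd : L.Nodup) (hch : Chain' N.Adj L)
    (hwrap : ∀ xa ∈ L.getLast?, ∀ xb ∈ L.head?, N.Adj xa xb)
    (hsub : ∀ z ∈ L, z ∈ N.verts) : N.BiconnectedSet L.toFinset := by
  have hcard : L.toFinset.card = L.length := List.toFinset_card_of_nodup hnd
  refine ⟨by omega, fun z hz => hsub z (List.mem_toFinset.1 hz), ?_, ?_⟩
  · -- connectivity
    intro u hu w hw
    cases L with
    | nil => simp at hlen
    | cons a t =>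
      exact chain_ci_pair hch (fun z hz => List.mem_toFinset.2 hz)
        (List.mem_toFinset.1 hu) (List.mem_toFinset.1 hw)
  · -- no cut vertex
    intro c hc u hu w hw
    obtain ⟨l1, l2, hLdec⟩ := List.append_of_mem (List.mem_toFinset.1 hc)
    have hnd' := hnd
    rw [hLdec, List.nodup_append] at hnd'
    obtain ⟨hnd1, hnd2, hdisj⟩ := hnd'
    have hcl1 : c ∉ l1 := fun h => hdisj c h c (by simp) rfl
    have hcl2 : c ∉ l2 := (List.nodup_cons.1 hnd2).1
    have hSeq : L.toFinset.erase c = (l1 ++ l2).toFinset := by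
      ext z
      simp only [Finset.mem_erase, List.mem_toFinset, hLdec, List.mem_append, List.mem_cons]
      constructor
      · rintro ⟨hzc, hz | (rfl | hz)⟩
        · exact Or.inl hz
        · exact absurd rfl hzc
        · exact Or.inr hz
      · rintro (hz | hz)
        · exact ⟨fun h => hcl1 (h ▸ hz), Or.inl hz⟩
        · exact ⟨fun h => hcl2 (h ▸ hz), Or.inr (Or.inr hz)⟩
    rw [hSeq] at hu hw ⊢
    -- connectivity of the cut-open cycle
    have hchain := hch
    rw [hLdec, List.chain'_append] at hchain
    obtain ⟨hch1, hch2, hj12⟩ := hchain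
    have hch2' : Chain' N.Adj l2 := hch2.tail
    have hmem1 : ∀ z ∈ l1, z ∈ (l1 ++ l2).toFinset := fun z hz =>
      List.mem_toFinset.2 (List.mem_append.2 (Or.inl hz))
    have hmem2 : ∀ z ∈ l2, z ∈ (l1 ++ l2).toFinset := fun z hz =>
      List.mem_toFinset.2 (List.mem_append.2 (Or.inr hz))
    have hcases : ∀ z ∈ (l1 ++ l2).toFinset, z ∈ l1 ∨ z ∈ l2 := fun z hz =>
      List.mem_append.1 (List.mem_toFinset.1 hz)
    cases hl1 : l1 with
    | nil =>
      -- L = c :: l2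
      subst hl1
      cases hl2 : l2 with
      | nil => subst hl2; simp at hu
      | cons a2 t2 =>
        subst hl2
        have hu' := (hcases u hu).resolve_left (by simp)
        have hw' := (hcases w hw).resolve_left (by simp)
        exact chain_ci_pair hch2' (fun z hz => hmem2 z hz) hu' hw'
    | cons a1 t1 =>
      subst hl1
      -- hub : a1
      have hhub : ∀ z ∈ (a1 :: t1 ++ l2).toFinset,
          N.ConnectedIn ((a1 :: t1 ++ l2).toFinset) z a1 := by
        intro z hz
        rcases hcases z hz with hz1 | hz2
        · exact ci_symm (chain_ci hch1 (fun y hy => hmem1 y hy) z hz1)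
        · -- z ∈ l2 : go down to the end of l2, use the wrap edge
          cases hl2 : l2 with
          | nil => subst hl2; simp at hz2
          | cons a2 t2 =>
            subst hl2
            have hgl : (a2 :: t2).getLast? = some ((a2 :: t2).getLast (List.cons_ne_nil _ _)) :=
              List.getLast?_eq_getLast_of_ne_nil _
            set g := (a2 :: t2).getLast (List.cons_ne_nil _ _) with hg
            have hgmem : g ∈ a2 :: t2 := List.getLast_mem _
            have hLlast : L.getLast? = some g := by
              rw [hLdec, List.getLast?_append_of_ne_nil _ (List.cons_ne_nil _ _),
                List.getLast?_cons_cons]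
              exact hgl
            have hLhead : L.head? = some a1 := by rw [hLdec]; rfl
            have hwrap' : N.Adj g a1 :=
              hwrap g (Option.mem_def.2 hLlast) a1 (Option.mem_def.2 hLhead)
            have hzg := chain_ci_pair (S := (a1 :: t1 ++ a2 :: t2).toFinset) hch2'
              (fun y hy => hmem2 y hy) hz2 hgmem
            exact hzg.trans (ci_single (hmem2 g hgmem) (hmem1 a1 (by simp)) hwrap')
      exact (hhub u hu).trans (ci_symm (hhub w hw))

end MLAux
namespace MLAux
open Net Relation List

variable {X : Type} {N : Net X}

lemma cycle_lemma (hNet : N.IsNetwork) {v a b : ℕ} (hvv : v ∈ N.verts)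
    (ha : (a, v) ∈ N.edges) (hb : (b, v) ∈ N.edges) (hab : a ≠ b) :
    ∃ B : Finset ℕ, N.BiconnectedSet B ∧ v ∈ B ∧ a ∈ B ∧ b ∈ B ∧
      ((∃ z ∈ B, (z, a) ∈ N.edges) ∨ ∃ z ∈ B, (a, z) ∈ N.edges ∧ N.Reaches z b) := by
  obtain ⟨r, hr, _⟩ := hNet.2.2.1
  have hav : a ∈ N.verts := (edge_verts hNet ha).1
  have hbv : b ∈ N.verts := (edge_verts hNet hb).1
  obtain ⟨lp, hPch, hPlast⟩ := reaches_path (root_reaches hNet hr a hav)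
  obtain ⟨lq, hQch, hQlast⟩ := reaches_path (root_reaches hNet hr b hbv)
  set P := r :: lp with hPdef
  set Q := r :: lq with hQdef
  have hPnd : P.Nodup := chain_nodup hNet hPch
  have hQnd : Q.Nodup := chain_nodup hNet hQch
  have hPverts : ∀ z ∈ P, z ∈ N.verts := chain_mem_verts hNet hPch hr.1
  have hQverts : ∀ z ∈ Q, z ∈ N.verts := chain_mem_verts hNet hQch hr.1
  have hvP : v ∉ P := fun hv =>
    reaches_edge_cycle hNet (chain_mem_reaches_last hPch hPlast hv) ha
  have hvQ : v ∉ Q := fun hv =>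
    reaches_edge_cycle hNet (chain_mem_reaches_last hQch hQlast hv) hb
  obtain ⟨pre, d, suf, hdec, hdQ, hpre⟩ := first_split (· ∈ Q) P.reverse
    ⟨r, List.mem_reverse.2 (by rw [hPdef]; simp), by rw [hQdef]; simp⟩
  have hPdec : P = suf.reverse ++ d :: pre.reverse := by
    have h1 := congrArg List.reverse hdec
    rw [List.reverse_reverse] at h1
    rw [h1, List.reverse_append, List.reverse_cons]
    simp
  set s2 := pre.reverse with hs2def
  have hs2Q : ∀ z ∈ s2, z ∉ Q := fun z hz => hpre z (List.mem_reverse.1 hz)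
  -- P-arc
  have hch1 : Chain' N.Edge (d :: s2) := by
    have := hPch; rw [hPdec, List.chain'_append] at this; exact this.2.1
  have hlast1 : (d :: s2).getLast? = some a := by
    have := hPlast
    rwa [hPdec, List.getLast?_append_of_ne_nil _ (List.cons_ne_nil _ _)] at this
  have hnd1 : (d :: s2).Nodup := by
    have := hPnd; rw [hPdec, List.nodup_append] at this; exact this.2.1
  have harc1P : ∀ z ∈ d :: s2, z ∈ P := by
    intro z hz; rw [hPdec]; exact List.mem_append.2 (Or.inr hz)
  -- Q-arc
  obtain ⟨q1, q2, hQdec⟩ := List.append_of_mem hdQ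
  have hch2full : Chain' N.Edge (d :: q2) := by
    have := hQch; rw [hQdec, List.chain'_append] at this; exact this.2.1
  have hlast2 : (d :: q2).getLast? = some b := by
    have := hQlast
    rwa [hQdec, List.getLast?_append_of_ne_nil _ (List.cons_ne_nil _ _)] at this
  have hndq : (d :: q2).Nodup := by
    have := hQnd; rw [hQdec, List.nodup_append] at this; exact this.2.1
  have hq2Q : ∀ z ∈ q2, z ∈ Q := by
    intro z hz; rw [hQdec]; exact List.mem_append.2 (Or.inr (by simp [hz]))
  have hdnotq2 : d ∉ q2 := (List.nodup_cons.1 hndq).1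
  have hvarc1 : v ∉ d :: s2 := fun h => hvP (harc1P v h)
  have hvq2 : v ∉ q2 := fun h => hvQ (hq2Q v h)
  -- the cycle list
  set L := (d :: s2) ++ v :: q2.reverse with hLdef
  have hLnd : L.Nodup := by
    rw [hLdef, List.nodup_append]
    refine ⟨hnd1, List.nodup_cons.2 ⟨fun h => hvq2 (List.mem_reverse.1 h),
      List.nodup_reverse.2 (List.nodup_cons.1 hndq).2⟩, ?_⟩
    intro z hz1 _ hz2 rfl
    rcases List.mem_cons.1 hz2 with rfl | hz2'
    · exact hvarc1 hz1
    · have hzq2 : z ∈ q2 := List.mem_reverse.1 hz2'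
      rcases List.mem_cons.1 hz1 with rfl | hz1'
      · exact hdnotq2 hzq2
      · exact hs2Q z hz1' (hq2Q z hzq2)
  have hLch : Chain' N.Adj L := by
    rw [hLdef, List.chain'_append]
    refine ⟨List.Chain'.imp (fun _ _ h => Or.inl h) hch1, ?_, ?_⟩
    · refine List.chain'_cons'.2 ⟨?_, ?_⟩
      · intro y hy
        rw [List.head?_reverse] at hy
        cases hq2 : q2 with
        | nil => subst hq2; simp at hy
        | cons c0 t0 =>
          have : q2.getLast? = some b := by
            have := hlast2; rw [hq2] at this ⊢
            rwa [List.getLast?_cons_cons] at this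
          rw [this] at hy
          obtain rfl : b = y := by simpa using hy
          exact Or.inr hb
      · exact List.chain'_reverse.2 (List.Chain'.imp (fun _ _ h => Or.inr h) hch2full.tail)
    · intro xx hx yy hy
      rw [hlast1] at hx
      obtain rfl : a = xx := by simpa using hx
      obtain rfl : v = yy := by simpa using hy
      exact Or.inl ha
  have hLhead : L.head? = some d := by rw [hLdef]; rfl
  have hLwrap : ∀ xa ∈ L.getLast?, ∀ xb ∈ L.head?, N.Adj xa xb := by
    intro xa hxa xb hxb
    rw [hLhead] at hxb
    obtain rfl : d = xb := by simpa using hxb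
    have hgl : L.getLast? = (v :: q2.reverse).getLast? := by
      rw [hLdef]
      exact List.getLast?_append_of_ne_nil _ (List.cons_ne_nil _ _)
    cases hq2 : q2 with
    | nil =>
      subst hq2
      rw [hgl] at hxa
      obtain rfl : v = xa := by simpa using hxa
      have hbd : b = d := by
        have := hlast2; simp at this; exact this.symm
      exact Or.inr (hbd ▸ hb)
    | cons c0 t0 =>
      rw [hgl, hq2] at hxa
      have hgl2 : (v :: (c0 :: t0).reverse).getLast? = some c0 := by
        rw [show (c0 :: t0).reverse = t0.reverse ++ [c0] from by simp,
          show v :: (t0.reverse ++ [c0]) = (v :: t0.reverse) ++ [c0] from rfl,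
          List.getLast?_concat]
      rw [hgl2] at hxa
      obtain rfl : c0 = xa := by simpa using hxa
      have hedge : N.Edge d c0 := by
        have h := hch2full; rw [hq2] at h
        exact (List.chain'_cons.1 h).1
      exact Or.inr hedge
  have hLlen : 3 ≤ L.length := by
    have hne : s2 ≠ [] ∨ q2 ≠ [] := by
      by_contra hcon
      push_neg at hcon
      obtain ⟨h1, h2⟩ := hcon
      apply hab
      have ha' : d = a := by rw [h1] at hlast1; simpa using hlast1
      have hb' : d = b := by rw [h2] at hlast2; simpa using hlast2
      rw [← ha', ← hb']
    rw [hLdef]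
    simp only [List.length_append, List.length_cons, List.length_reverse]
    rcases hne with h | h
    · have := List.length_pos.2 h; omega
    · have := List.length_pos.2 h; omega
  have hLverts : ∀ z ∈ L, z ∈ N.verts := by
    intro z hz
    rw [hLdef] at hz
    rcases List.mem_append.1 hz with h | h
    · exact hPverts z (harc1P z h)
    · rcases List.mem_cons.1 h with rfl | h'
      · exact hvv
      · exact hQverts z (hq2Q z (List.mem_reverse.1 h'))
  have hbiconn := cycle_biconn hNet hLlen hLnd hLch hLwrap hLverts
  have hamem : a ∈ L := by
    rw [hLdef]
    exact List.mem_append.2 (Or.inl (mem_of_getLast?' hlast1))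
  have hvmem : v ∈ L := by rw [hLdef]; exact List.mem_append.2 (Or.inr (by simp))
  have hbmem : b ∈ L := by
    cases hq2 : q2 with
    | nil =>
      have hbd : b = d := by have := hlast2; rw [hq2] at this; simpa using this.symm
      rw [hLdef, hbd]; simp
    | cons c0 t0 =>
      have : q2.getLast? = some b := by
        have := hlast2; rw [hq2] at this ⊢
        rwa [List.getLast?_cons_cons] at this
      have : b ∈ q2 := mem_of_getLast?' this
      rw [hLdef]
      exact List.mem_append.2 (Or.inr (by simp [List.mem_reverse.2 this]))
  refine ⟨L.toFinset, hbiconn, List.mem_toFinset.2 hvmem, List.mem_toFinset.2 hamem,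
    List.mem_toFinset.2 hbmem, ?_⟩
  rcases eq_nil_or_append s2 with hs2e | ⟨s2', z1, hs2e⟩
  · -- d = a : second branch
    right
    have hda : d = a := by rw [hs2e] at hlast1; simpa using hlast1
    have hq2ne : q2 ≠ [] := by
      intro h
      apply hab
      have hbd : d = b := by rw [h] at hlast2; simpa using hlast2
      rw [← hda, ← hbd]
    cases hq2 : q2 with
    | nil => exact absurd hq2 hq2ne
    | cons z0 t0 =>
      have hedge : N.Edge a z0 := by
        have := hch2full; rw [hq2, hda] at this
        exact (List.chain'_cons.1 this).1
      have hgl : q2.getLast? = some b := by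
        have := hlast2; rw [hq2] at this ⊢
        rwa [List.getLast?_cons_cons] at this
      have hreach : N.Reaches z0 b := by
        refine chain_mem_reaches_last (hch2full.tail) ?_ ?_
        · rw [hq2] at hgl ⊢; exact hgl
        · rw [hq2]; simp
      refine ⟨z0, ?_, hedge, hreach⟩
      rw [hLdef]
      refine List.mem_toFinset.2 (List.mem_append.2 (Or.inr ?_))
      simp [List.mem_reverse.2 (by rw [hq2]; simp : z0 ∈ q2)]
  · -- a has a predecessor on the P-arc
    left
    have hza : z1 = a := by
      rw [hs2e] at hlast1
      have heq : (d :: (s2' ++ [z1])) = (d :: s2') ++ [z1] := by simp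
      rw [heq, List.getLast?_concat] at hlast1
      simpa using hlast1
    rw [hs2e, hza] at hch1
    obtain ⟨z, hz, hor⟩ := chain_last hch1
    refine ⟨z, ?_, hz⟩
    rw [hLdef]
    refine List.mem_toFinset.2 (List.mem_append.2 (Or.inl ?_))
    rcases hor with ⟨_, rfl⟩ | hzmem
    · simp
    · rw [hs2e, hza]
      exact List.mem_cons.2 (Or.inr (List.mem_append.2 (Or.inl hzmem)))
end MLAux
namespace MLAux
open Net Relation List

variable {X : Type} {N : Net X} {E : Finset (ℕ × ℕ)}

lemma tree_ne_retic {a b : ℕ} (ha : N.IsTreeNode a) (hb : N.IsRetic b) : a ≠ b := by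
  intro h; subst h
  have := ha.2.1; have := hb.2.1; omega

lemma retic_ne_leaf {a b : ℕ} (ha : N.IsRetic a) (hb : N.IsLeaf b) : a ≠ b := by
  intro h; subst h
  have := ha.2.2; have := hb.2.2; omega

lemma two_out_edges {s : Finset (ℕ × ℕ)} {v a b : ℕ} (ha : (v, a) ∈ s) (hb : (v, b) ∈ s)
    (hab : a ≠ b) : 2 ≤ (s.filter fun e => e.1 = v).card := by
  have hsub : ({(v, a), (v, b)} : Finset (ℕ × ℕ)) ⊆ s.filter fun e => e.1 = v := by
    intro e he
    rcases Finset.mem_insert.1 he with rfl | he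
    · exact Finset.mem_filter.2 ⟨ha, rfl⟩
    · rw [Finset.mem_singleton] at he; subst he; exact Finset.mem_filter.2 ⟨hb, rfl⟩
  have hcard : ({(v, a), (v, b)} : Finset (ℕ × ℕ)).card = 2 := by
    rw [Finset.card_insert_of_notMem (by simp [hab]), Finset.card_singleton]
  calc 2 = _ := hcard.symm
  _ ≤ _ := Finset.card_le_card hsub

/-- a reticulation in a blob has both its parents in the blob -/
lemma blob_retic_parents (hC : Ctx N E) {S : Finset ℕ} (hS : N.BlobSet S) {v : ℕ}
    (hv : v ∈ S) (hret : N.IsRetic v) : ∀ q, (q, v) ∈ N.edges → q ∈ S := by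
  have hNet := hC.net
  obtain ⟨a, b, hab, ha, hb⟩ := exists_two_parents hret.2.1
  obtain ⟨cv, hcv⟩ := exists_child (v := v) (by rw [hret.2.2]; omega)
  have hchild : ∀ z, (v, z) ∈ N.edges → z = cv := fun z hz => unique_child hret.2.2 hz hcv
  have hpar : ∃ q ∈ S, (q, v) ∈ N.edges := by
    obtain ⟨z, hzS, hadj, hzv⟩ := exists_neighbor hNet hS.1 hv
    rcases hadj with hE | hE
    · have hzc : z = cv := hchild z hE
      subst hzc
      obtain ⟨z', hz'S, hadj', hz'v⟩ := neighbor_in_erase hNet hS.1 hv hzS (Ne.symm hzv)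
      obtain ⟨hz'ne, hz'Smem⟩ := Finset.mem_erase.1 hz'S
      rcases hadj' with hE' | hE'
      · exact absurd (hchild z' hE') hz'ne
      · exact ⟨z', hz'Smem, hE'⟩
    · exact ⟨z, hzS, hE⟩
  obtain ⟨q, hqS, hq⟩ := hpar
  obtain ⟨B, hB, hvB, haB, hbB, _⟩ := cycle_lemma hNet hret.1 ha hb hab
  obtain ⟨T, hT, hBT⟩ := exists_blob_containing hNet hB
  have hqT : q ∈ T := by
    rcases two_parents hret.2.1 ha hb hab q hq with rfl | rfl
    · exact hBT haB
    · exact hBT hbB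
  have hqv : q ≠ v := fun h => edge_irrefl hNet (h ▸ hq)
  have hST : S = T := blob_eq_two hNet hS hT hv (hBT hvB) hqS hqT (Ne.symm hqv)
  intro q' hq'
  rcases two_parents hret.2.1 ha hb hab q' hq' with rfl | rfl
  · rw [hST]; exact hBT haB
  · rw [hST]; exact hBT hbB

lemma blob_absorb (hNet : N.IsNetwork) {B Sf : Finset ℕ} (hB : N.BiconnectedSet B)
    (hSf : N.BlobSet Sf) {c1 c2 : ℕ} (h1B : c1 ∈ B) (h1f : c1 ∈ Sf) (h2B : c2 ∈ B)
    (h2f : c2 ∈ Sf) (h12 : c1 ≠ c2) : ∀ z ∈ B, z ∈ Sf := by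
  obtain ⟨T, hT, hBT⟩ := exists_blob_containing hNet hB
  have heq : Sf = T := blob_eq_two hNet hSf hT h1f (hBT h1B) h2f (hBT h2B) h12
  intro z hz; rw [heq]; exact hBT hz

section Endgame

variable {k : ℕ}

/-- two distinct deleted edges inside one level-k blob contradict the MLLS uniqueness -/
lemma two_edges_one_blob (hNet : N.IsNetwork)
    (huniq : ∀ S, N.BlobSet S → N.reticCount S = k → ∃! e, e ∈ E ∧ e.1 ∈ S ∧ e.2 ∈ S)
    {f g : ℕ × ℕ} (hf : f ∈ E) (hg : g ∈ E) (hfg : f ≠ g) {Sf Sg : Finset ℕ}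
    (hSf : N.BlobSet Sf) (hSfk : N.reticCount Sf = k) (hf1 : f.1 ∈ Sf) (hf2 : f.2 ∈ Sf)
    (hSg : N.BlobSet Sg) (hg1 : g.1 ∈ Sg) (hg2 : g.2 ∈ Sg)
    {c1 c2 : ℕ} (h1f : c1 ∈ Sf) (h1g : c1 ∈ Sg) (h2f : c2 ∈ Sf) (h2g : c2 ∈ Sg)
    (h12 : c1 ≠ c2) : False := by
  have heq : Sf = Sg := blob_eq_two hNet hSf hSg h1f h1g h2f h2g h12
  obtain ⟨e0, _, hun⟩ := huniq Sf hSf hSfk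
  have h1 := hun f ⟨hf, hf1, hf2⟩
  have h2 := hun g ⟨hg, heq ▸ hg1, heq ▸ hg2⟩
  exact hfg (h1.trans h2.symm)

/-- if a common vertex of two blobs has its neighbours among a parent, an `Sf`-vertex and
an `Sg`-vertex, the two blobs share two vertices -/
lemma second_common (hNet : N.IsNetwork)
    (huniq : ∀ S, N.BlobSet S → N.reticCount S = k → ∃! e, e ∈ E ∧ e.1 ∈ S ∧ e.2 ∈ S)
    {f g : ℕ × ℕ} (hf : f ∈ E) (hg : g ∈ E) (hfg : f ≠ g) {Sf Sg : Finset ℕ}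
    (hSf : N.BlobSet Sf) (hSfk : N.reticCount Sf = k) (hf1 : f.1 ∈ Sf) (hf2 : f.2 ∈ Sf)
    (hSg : N.BlobSet Sg) (hSgk : N.reticCount Sg = k) (hg1 : g.1 ∈ Sg) (hg2 : g.2 ∈ Sg)
    {w π nf ng : ℕ} (hwf : w ∈ Sf) (hwg : w ∈ Sg) (hnf : nf ∈ Sf) (hng : ng ∈ Sg)
    (hwnf : w ≠ nf) (hwng : w ≠ ng)
    (hnbr : ∀ z, N.Adj w z → z = π ∨ z = nf ∨ z = ng) : False := by
  obtain ⟨z1, hz1, hadj1, hz1w⟩ := neighbor_in_erase hNet hSg.1 hwg hng hwng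
  obtain ⟨hz1ne, hz1Sg⟩ := Finset.mem_erase.1 hz1
  rcases hnbr z1 hadj1 with rfl | rfl | rfl
  · -- z1 = π ∈ Sg
    obtain ⟨z2, hz2, hadj2, hz2w⟩ := neighbor_in_erase hNet hSf.1 hwf hnf hwnf
    obtain ⟨hz2ne, hz2Sf⟩ := Finset.mem_erase.1 hz2
    rcases hnbr z2 hadj2 with rfl | rfl | rfl
    · -- z2 = π ∈ Sf : common pair {w, π}
      exact two_edges_one_blob hNet huniq hf hg hfg hSf hSfk hf1 hf2 hSg hg1 hg2
        hwf hwg hz2Sf hz1Sg (Ne.symm hz1w)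
    · exact absurd rfl hz2ne
    · -- ng ∈ Sf : common pair {w, ng}
      exact two_edges_one_blob hNet huniq hf hg hfg hSf hSfk hf1 hf2 hSg hg1 hg2
        hwf hwg hz2Sf hng hwng
  · -- nf ∈ Sg : common pair {w, nf}
    exact two_edges_one_blob hNet huniq hf hg hfg hSf hSfk hf1 hf2 hSg hg1 hg2
      hwf hwg hnf hz1Sg hwnf
  · exact absurd rfl hz1ne

end Endgame

/-- the unique parent of the tree head of a deleted edge whose other child is a leaf
lies in any blob containing the deleted edge -/
lemma parent_absorbed (hC : Ctx N E) {g : ℕ × ℕ} (hg : g ∈ E) {Sg : Finset ℕ}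
    (hSg : N.BlobSet Sg) (hg1 : g.1 ∈ Sg) (hg2 : g.2 ∈ Sg) {xh pp : ℕ} (hxh : N.IsLeaf xh)
    (hgx : (g.1, xh) ∈ N.edges) (hπ : (pp, g.1) ∈ N.edges) : pp ∈ Sg := by
  have htree := Efst_tree hC hg
  have hret := (hC.retE g hg).2
  have hge : (g.1, g.2) ∈ N.edges := by rw [Prod.mk.eta]; exact (hC.retE g hg).1
  obtain ⟨β, hβne, hβ, _⟩ := other_parent hret.2.1 hge
  obtain ⟨B0, hB0, hrB, huB, hβB, hbr⟩ := cycle_lemma hC.net hret.1 hge hβ (Ne.symm hβne)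
  have habs := blob_absorb hC.net hB0 hSg huB hg1 hrB hg2 (tree_ne_retic htree hret)
  rcases hbr with ⟨z, hzB, hz⟩ | ⟨z, hzB, hz, hreach⟩
  · have hzπ : z = pp := unique_parent htree.2.1 hz hπ
    exact hzπ ▸ habs z hzB
  · exfalso
    rcases two_children htree.2.2 hge hgx (Ne.symm (retic_ne_leaf hret hxh)).symm z hz
      with rfl | rfl
    · exact reaches_edge_cycle hC.net hreach hβ
    · rcases Relation.ReflTransGen.cases_head hreach with heq | ⟨c, hc, _⟩
      · subst heq
        have := outdeg_pos hβ; have := hxh.2.2; omega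
      · have := outdeg_pos hc; have := hxh.2.2; omega

lemma tree_nbrs (hNet : N.IsNetwork) {w π c1 c2 : ℕ} (htree : N.IsTreeNode w)
    (hπ : (π, w) ∈ N.edges) (h1 : (w, c1) ∈ N.edges) (h2 : (w, c2) ∈ N.edges)
    (h12 : c1 ≠ c2) : ∀ z, N.Adj w z → z = π ∨ z = c1 ∨ z = c2 := by
  rintro z (h | h)
  · rcases two_children htree.2.2 h1 h2 h12 z h with rfl | rfl
    · exact Or.inr (Or.inl rfl)
    · exact Or.inr (Or.inr rfl)
  · exact Or.inl (unique_parent htree.2.1 h hπ)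

lemma hd_symm {x y : ℕ} (hd : ∀ l, N.IsUpDownPath x y l → 5 ≤ l.length) :
    ∀ l, N.IsUpDownPath y x l → 5 ≤ l.length := by
  rintro l ⟨P, Q, hP, hQ, hh, hPl, hQl, rfl⟩
  have hud : N.IsUpDownPath x y (Q.reverse ++ P.tail) := ⟨Q, P, hQ, hP, hh.symm, hQl, hPl, rfl⟩
  have h5 := hd _ hud
  have hPn : 1 ≤ P.length := List.length_pos.2 hP.1
  have hQn : 1 ≤ Q.length := List.length_pos.2 hQ.1
  simp only [List.length_append, List.length_reverse, List.length_tail] at h5 ⊢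
  omega

end MLAux
namespace MLAux
open Net Relation List

variable {X : Type} {N : Net X} {E : Finset (ℕ × ℕ)} {D : Finset ℕ} {k : ℕ}

/-- a contracted cherry edge whose path has at least two interior vertices is impossible -/
lemma end_two (hC : Ctx N E)
    (huniq : ∀ S, N.BlobSet S → N.reticCount S = k → ∃! e, e ∈ E ∧ e.1 ∈ S ∧ e.2 ∈ S)
    (hblob3 : ∀ e ∈ E, ∃ S, N.BlobSet S ∧ N.reticCount S = k ∧ e.1 ∈ S ∧ e.2 ∈ S)
    (hDH : DH N E D) {p xh : ℕ} {A : List ℕ} (hxh : N.IsLeaf xh)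
    (hA : ∀ z ∈ A, z ∈ D) (hch : Chain' (NER N E) (p :: A ++ [xh])) (hlen : 2 ≤ A.length) :
    False := by
  rcases eq_nil_or_append A with rfl | ⟨A0, w2, rfl⟩
  · simp at hlen
  rcases eq_nil_or_append A0 with rfl | ⟨A1, w1, rfl⟩
  · simp at hlen
  have hw2x : NER N E w2 xh := chain_last' hch
  have hch0 : Chain' (NER N E) (p :: (A1 ++ [w1]) ++ [w2]) := chain_init hch
  have hw12 : NER N E w1 w2 := chain_last' hch0
  have hw2D : w2 ∈ D := hA w2 (by simp)
  have hw1D : w1 ∈ D := hA w1 (by simp)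
  obtain ⟨g, hg, hw2g⟩ := mem_VE.1 (hDH w2 hw2D).1
  have hgret := (hC.retE g hg).2
  rcases hw2g with rfl | rfl
  swap
  · exact retic_not_tl hgret (VE_child_tl hC (hDH w1 hw1D).1 hw12)
  · have htreeg := Efst_tree hC hg
    have hge : (g.1, g.2) ∈ N.edges := by rw [Prod.mk.eta]; exact (hC.retE g hg).1
    obtain ⟨Sg, hSgb, hSgk, hg1S, hg2S⟩ := hblob3 g hg
    have hw1Sg : w1 ∈ Sg :=
      parent_absorbed hC hg hSgb hg1S hg2S hxh (NER_edge hw2x) (NER_edge hw12)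
    obtain ⟨f, hf, hw1f⟩ := mem_VE.1 (hDH w1 hw1D).1
    have hfret := (hC.retE f hf).2
    have hfe : (f.1, f.2) ∈ N.edges := by rw [Prod.mk.eta]; exact (hC.retE f hf).1
    have hfg : f ≠ g := by
      intro h; subst h
      rcases hw1f with h' | h'
      · rw [h'] at hw12
        exact edge_irrefl hC.net (NER_edge hw12)
      · rw [h'] at hw12
        exact reaches_edge_cycle hC.net
          (Relation.ReflTransGen.single (NER_edge hw12)) hfe
    obtain ⟨Sf, hSfb, hSfk, hf1S, hf2S⟩ := hblob3 f hf
    rcases hw1f with rfl | rfl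
    · -- w1 = f.1
      have htreef := Efst_tree hC hf
      obtain ⟨π, hπ⟩ := exists_parent (v := f.1) (by rw [htreef.2.1]; omega)
      have hnbr := tree_nbrs hC.net htreef hπ hfe (NER_edge hw12)
        (Ne.symm (tree_ne_retic htreeg hfret))
      exact second_common hC.net huniq hf hg hfg hSfb hSfk hf1S hf2S hSgb hSgk hg1S hg2S
        hf1S hw1Sg hf2S hg1S (tree_ne_retic htreef hfret)
        (fun h => edge_irrefl hC.net (h ▸ NER_edge hw12)) hnbr
    · -- w1 = f.2 : both parents of f.2 in Sg
      have hf1Sg : f.1 ∈ Sg := blob_retic_parents hC hSgb hw1Sg hfret f.1 hfe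
      exact two_edges_one_blob hC.net huniq hf hg hfg hSfb hSfk hf1S hf2S hSgb hg1S hg2S
        hf1S hf1Sg hf2S hw1Sg (tree_ne_retic (Efst_tree hC hf) hfret)

/-- 1-1 case, reticulation on the `xh` side and tree node on the `yh` side -/
lemma end_mixed (hC : Ctx N E)
    (huniq : ∀ S, N.BlobSet S → N.reticCount S = k → ∃! e, e ∈ E ∧ e.1 ∈ S ∧ e.2 ∈ S)
    (hblob3 : ∀ e ∈ E, ∃ S, N.BlobSet S ∧ N.reticCount S = k ∧ e.1 ∈ S ∧ e.2 ∈ S)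
    {p xh yh : ℕ} (hxh : N.IsLeaf xh) (hyh : N.IsLeaf yh)
    (hd5 : ∀ l, N.IsUpDownPath xh yh l → 5 ≤ l.length)
    {f g : ℕ × ℕ} (hf : f ∈ E) (hg : g ∈ E)
    (hpw : NER N E p f.2) (hwx : NER N E f.2 xh) (hpw' : NER N E p g.1)
    (hw'y : NER N E g.1 yh) (hptree : N.IsTreeNode p) : False := by
  have hfret := (hC.retE f hf).2
  have htreeg := Efst_tree hC hg
  have hfe : (f.1, f.2) ∈ N.edges := by rw [Prod.mk.eta]; exact (hC.retE f hf).1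
  have hge : (g.1, g.2) ∈ N.edges := by rw [Prod.mk.eta]; exact (hC.retE g hg).1
  by_cases hfg : f = g
  · -- reticulated cherry: short up-down path
    subst hfg
    have hud : N.IsUpDownPath xh yh ([f.1, f.2, xh].reverse ++ [f.1, yh].tail) := by
      refine ⟨[f.1, f.2, xh], [f.1, yh], ⟨by simp, ?_⟩, ⟨by simp, ?_⟩, by simp, by simp, by simp, rfl⟩
      · exact List.chain'_cons.2 ⟨hfe, List.chain'_pair.2 (NER_edge hwx)⟩
      · exact List.chain'_pair.2 (NER_edge hw'y)
    have := hd5 _ hud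
    simp at this
  · obtain ⟨Sf, hSfb, hSfk, hf1S, hf2S⟩ := hblob3 f hf
    obtain ⟨Sg, hSgb, hSgk, hg1S, hg2S⟩ := hblob3 g hg
    have hpSf : p ∈ Sf := blob_retic_parents hC hSfb hf2S hfret p (NER_edge hpw)
    have hpSg : p ∈ Sg :=
      parent_absorbed hC hg hSgb hg1S hg2S hyh (NER_edge hw'y) (NER_edge hpw')
    obtain ⟨π, hπ⟩ := exists_parent (v := p) (by rw [hptree.2.1]; omega)
    have hnbr := tree_nbrs hC.net hptree hπ (NER_edge hpw) (NER_edge hpw')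
      (Ne.symm (tree_ne_retic htreeg hfret))
    exact second_common hC.net huniq hf hg hfg hSfb hSfk hf1S hf2S hSgb hSgk hg1S hg2S
      hpSf hpSg hf2S hg1S (fun h => edge_irrefl hC.net (h ▸ NER_edge hpw))
      (fun h => edge_irrefl hC.net (h ▸ NER_edge hpw')) hnbr

/-- 1-1 case, tree nodes on both sides -/
lemma end_uu (hC : Ctx N E)
    (huniq : ∀ S, N.BlobSet S → N.reticCount S = k → ∃! e, e ∈ E ∧ e.1 ∈ S ∧ e.2 ∈ S)
    (hblob3 : ∀ e ∈ E, ∃ S, N.BlobSet S ∧ N.reticCount S = k ∧ e.1 ∈ S ∧ e.2 ∈ S)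
    {p xh yh : ℕ} (hxh : N.IsLeaf xh) (hyh : N.IsLeaf yh)
    {f g : ℕ × ℕ} (hf : f ∈ E) (hg : g ∈ E)
    (hpw : NER N E p f.1) (hwx : NER N E f.1 xh) (hpw' : NER N E p g.1)
    (hw'y : NER N E g.1 yh) (hptree : N.IsTreeNode p) (hww' : f.1 ≠ g.1) : False := by
  have hfg : f ≠ g := fun h => hww' (by rw [h])
  obtain ⟨Sf, hSfb, hSfk, hf1S, hf2S⟩ := hblob3 f hf
  obtain ⟨Sg, hSgb, hSgk, hg1S, hg2S⟩ := hblob3 g hg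
  have hpSf : p ∈ Sf :=
    parent_absorbed hC hf hSfb hf1S hf2S hxh (NER_edge hwx) (NER_edge hpw)
  have hpSg : p ∈ Sg :=
    parent_absorbed hC hg hSgb hg1S hg2S hyh (NER_edge hw'y) (NER_edge hpw')
  obtain ⟨π, hπ⟩ := exists_parent (v := p) (by rw [hptree.2.1]; omega)
  have hnbr := tree_nbrs hC.net hptree hπ (NER_edge hpw) (NER_edge hpw') hww'
  exact second_common hC.net huniq hf hg hfg hSfb hSfk hf1S hf2S hSgb hSgk hg1S hg2S
    hpSf hpSg hf1S hg1S (fun h => edge_irrefl hC.net (h ▸ NER_edge hpw))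
    (fun h => edge_irrefl hC.net (h ▸ NER_edge hpw')) hnbr

end MLAux
/-- If a binary level-`k` tree-child network `N` has leaves `x, y` with
up-down distance at least 4 (every up-down path has at least 5 nodes), then no MLLS of
`N` contains `x` and `y` as a cherry. -/
theorem pi_implies_no_cherry_in_MLLS {X : Type} (N : Net X) (hN : N.TreeChild)
    (k : ℕ) (hk : 1 ≤ k) (hl : N.IsLevel k)
    (x y : ℕ) (hx : N.IsLeaf x) (hy : N.IsLeaf y)
    (hd : ∀ l, N.IsUpDownPath x y l → 5 ≤ l.length) :
    ∀ M, N.IsMLLS k M → ¬ ∃ p, M.Edge p x ∧ M.Edge p y := by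
  classical
  open MLAux List Relation in
  intro M hM hcherry
  obtain ⟨p, hpx, hpy⟩ := hcherry
  obtain ⟨E, hval, huniq, hblob3, hclean⟩ := hM
  have hC : Ctx N E := ⟨hN.1, hN.2, fun e he => (hval e he).1⟩
  obtain ⟨D, hI⟩ := inv_rtg hC hclean.1
  have hDH := hI.hDH
  have hxy : x ≠ y := by
    intro h; subst h
    have h5 := hd [x]
      ⟨[x], [x], ⟨by simp, by simp⟩, ⟨by simp, by simp⟩, rfl, by simp, by simp, by simp⟩
    simp at h5
  have hpx' : (p, x) ∈ cEdges N E D := by rw [← hI.hedges]; exact hpx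
  have hpy' : (p, y) ∈ cEdges N E D := by rw [← hI.hedges]; exact hpy
  obtain ⟨⟨hpN, hxN⟩, hpD, hxD, A, hA, hchA⟩ := mem_cEdges.1 hpx'
  obtain ⟨⟨_, hyN⟩, _, hyD, B, hB, hchB⟩ := mem_cEdges.1 hpy'
  obtain ⟨c1, hpc1, hsh1⟩ := chain_first hchA
  obtain ⟨c2, hpc2, hsh2⟩ := chain_first hchB
  have hc12 : c1 ≠ c2 := by
    intro heq
    subst heq
    rcases hsh1 with ⟨rfl, rfl⟩ | ⟨tA, rfl⟩
    · rcases hsh2 with ⟨rfl, rfl⟩ | ⟨tB, rfl⟩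
      · exact hxy rfl
      · exact hxD (hB c1 (by simp))
    · rcases hsh2 with ⟨rfl, rfl⟩ | ⟨tB, rfl⟩
      · exact hyD (hA c1 (by simp))
      · have hcD : c1 ∈ D := hA c1 (by simp)
        exact hxy (desc_unique hC hDH (tA.length + tB.length) tA tB c1 x y hcD hxD hyD
          le_rfl (fun z hz => hA z (by simp [hz])) (fun z hz => hB z (by simp [hz]))
          hchA.tail hchB.tail)
  have hptree : N.IsTreeNode p := by
    have hout2 : 2 ≤ N.outdeg p := two_out_edges (NER_edge hpc1) (NER_edge hpc2) hc12
    rcases classify hC.net hpN with h | h | h | h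
    · exfalso; have := h.2.2; omega
    · exfalso; have := h.2.2; omega
    · exact h
    · exfalso; have := h.2.2; omega
  -- lifted up-down path gives at least two interior vertices
  have hlen2 : 2 ≤ A.length + B.length := by
    have hud : N.IsUpDownPath x y (((p :: A) ++ [x]).reverse ++ ((p :: B) ++ [y]).tail) := by
      refine ⟨(p :: A) ++ [x], (p :: B) ++ [y], ⟨by simp, ?_⟩, ⟨by simp, ?_⟩, ?_, ?_, ?_, rfl⟩
      · exact List.Chain'.imp (fun _ _ h => NER_edge h) hchA
      · exact List.Chain'.imp (fun _ _ h => NER_edge h) hchB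
      · simp
      · exact List.getLast?_concat
      · exact List.getLast?_concat
    have h5 := hd _ hud
    simp [List.cons_append] at h5
    omega
  by_cases hA2 : 2 ≤ A.length
  · exact end_two hC huniq hblob3 hDH hx hA hchA hA2
  by_cases hB2 : 2 ≤ B.length
  · exact end_two hC huniq hblob3 hDH hy hB hchB hB2
  have hA1 : A.length = 1 := by omega
  have hB1 : B.length = 1 := by omega
  obtain ⟨w, rfl⟩ := List.length_eq_one.1 hA1
  obtain ⟨w', rfl⟩ := List.length_eq_one.1 hB1
  have hc1w : w = c1 := by
    rcases hsh1 with ⟨h, _⟩ | ⟨tA, hA'⟩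
    · simp at h
    · injection hA' with h1 _
  subst hc1w
  have hc2w : w' = c2 := by
    rcases hsh2 with ⟨h, _⟩ | ⟨tB, hB'⟩
    · simp at h
    · injection hB' with h1 _
  subst hc2w
  have hwx : NER N E w x := chain_last' (l := []) hchA
  have hw'y : NER N E w' y := chain_last' (l := []) hchB
  have hwD : w ∈ D := hA w (by simp)
  have hw'D : w' ∈ D := hB w' (by simp)
  obtain ⟨f, hf, hwf⟩ := mem_VE.1 (hDH w hwD).1
  obtain ⟨g, hg, hw'g⟩ := mem_VE.1 (hDH w' hw'D).1
  rcases hwf with rfl | rfl <;> rcases hw'g with rfl | rfl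
  · -- tree / tree
    exact end_uu hC huniq hblob3 hx hy hf hg hpc1 hwx hpc2 hw'y hptree hc12
  · -- tree / retic : swapped mixed case
    exact end_mixed hC huniq hblob3 hy hx (hd_symm hd) hg hf hpc2 hw'y hpc1 hwx hptree
  · -- retic / tree
    exact end_mixed hC huniq hblob3 hx hy hd hf hg hpc1 hwx hpc2 hw'y hptree
  · -- retic / retic : tree-child violation at p
    obtain ⟨ctl, hctl, htl⟩ := hC.tc p hpN (tree_not_leaf hptree)
    rcases two_children hptree.2.2 (NER_edge hpc1) (NER_edge hpc2) hc12 ctl hctl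
      with rfl | rfl
    · exact retic_not_tl (hC.retE f hf).2 htl
    · exact retic_not_tl (hC.retE g hg).2 htl
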